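/- arXiv:2512.08151 — 5 statements merged into one kernel-verified Lean document; each statement's English description precedes it below -/
import Mathlib

section
/- Let ⟨·,·⟩ be an Ad-invariant inner product on ℝ^m. Then the normalized transfer θ̲ := (1/#F)·∑_{f∈F} Ad(f) is the orthogonal projection of ℝ^m onto the real linear span of the image θ(Γ) of the transfer homomorphism (with ℤ^m viewed inside ℝ^m): θ̲ ∘ θ̲ = θ̲, ⟨θ̲u, w⟩ = ⟨u, θ̲w⟩ for all u, w ∈ ℝ^m, and the range of θ̲ equals span_ℝ(θ(Γ)). -/
open scoped BigOperators Classical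
open Filter Matrix MeasureTheory

namespace NSVA

noncomputable section

/-- Convolution of two real-valued functions on a group. -/
def conv {G : Type*} [Group G] (μ ν : G → ℝ) : G → ℝ :=
  fun g => ∑' h : G, μ h * ν (h⁻¹ * g)

/-- Convolution powers: `convPow μ 0 = δ_1`, `convPow μ (n+1) = (convPow μ n) * μ`. -/
def convPow {G : Type*} [Group G] (μ : G → ℝ) : ℕ → G → ℝ
  | 0 => fun g => if g = 1 then 1 else 0
  | n + 1 => conv (convPow μ n) μ

/-- A probability measure on a countable set, viewed as a function. -/
def IsProb {G : Type*} (μ : G → ℝ) : Prop := (∀ g, 0 ≤ μ g) ∧ HasSum μ 1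

/-- The support of `μ` generates the group as a semigroup. -/
def Nondeg {G : Type*} [Group G] (μ : G → ℝ) : Prop :=
  ∀ g : G, g ∈ Subsemigroup.closure {x : G | 0 < μ x}

/-- `μ` is aperiodic: `μ_n(1) > 0` for all large enough `n`. -/
def Aperiodic {G : Type*} [Group G] (μ : G → ℝ) : Prop :=
  ∃ N : ℕ, ∀ n : ℕ, N ≤ n → 0 < convPow μ n 1

/-- Total variation distance between two (probability) functions. -/
def tv {Z : Type*} (p q : Z → ℝ) : ℝ := (1 / 2) * ∑' z : Z, |p z - q z|

/-- Word length with respect to a finite set `S₀`. -/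
def wordLength {G : Type*} [Group G] (S₀ : Finset G) (g : G) : ℕ :=
  sInf {n : ℕ | ∃ l : List G, (∀ s ∈ l, s ∈ S₀) ∧ l.length = n ∧ l.prod = g}

/-- Finite second moment with respect to a word metric given by a finite symmetric
generating set. -/
def FinSecondMoment {G : Type*} [Group G] (μ : G → ℝ) : Prop :=
  ∃ S₀ : Finset G, (∀ s ∈ S₀, s⁻¹ ∈ S₀) ∧ Subgroup.closure (S₀ : Set G) = ⊤ ∧
    Summable (fun g : G => (wordLength S₀ g : ℝ) ^ 2 * μ g)

/-- A group is virtually abelian if it has an abelian subgroup of finite index. -/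
def VirtAbelian (G : Type*) [Group G] : Prop :=
  ∃ A : Subgroup G, A.index ≠ 0 ∧ ∀ a b : A, a * b = b * a

/-- The noised measure `π^ρ` on `G × G`. -/
def noised {G : Type*} (μ : G → ℝ) (ρ : ℝ) : G × G → ℝ :=
  fun p => ρ * μ p.1 * μ p.2 + (1 - ρ) * μ p.1 * (if p.1 = p.2 then 1 else 0)

/-- First marginal of a measure on a product. -/
def marg1 {G₁ G₂ : Type*} (ν : G₁ × G₂ → ℝ) : G₁ → ℝ := fun γ₁ => ∑' γ₂ : G₂, ν (γ₁, γ₂)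

/-- Second marginal of a measure on a product. -/
def marg2 {G₁ G₂ : Type*} (ν : G₁ × G₂ → ℝ) : G₂ → ℝ := fun γ₂ => ∑' γ₁ : G₁, ν (γ₁, γ₂)

/-- A system of representatives of the right cosets `Λ\Γ` containing the identity,
together with the representative map `rep`, constant on right cosets. -/
structure RepSystem {Γ : Type*} [Group Γ] (Λ : Subgroup Γ) where
  Δ : Finset Γ
  one_mem : (1 : Γ) ∈ Δ
  rep : Γ → Γ
  rep_mem : ∀ γ : Γ, rep γ ∈ Δ
  rep_spec : ∀ γ : Γ, γ * (rep γ)⁻¹ ∈ Λ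
  rep_idem : ∀ x ∈ Δ, rep x = x
  rep_coset : ∀ γ : Γ, ∀ v ∈ Λ, rep (v * γ) = rep γ

variable {Γ : Type*} [Group Γ] {Λ : Subgroup Γ} {m : ℕ}

/-- The cocycle `α(x,s) = ψ(x·s·(x^s)⁻¹) ∈ ℤ^m`. -/
def cocycle (ψ : Λ ≃* Multiplicative (Fin m → ℤ)) (R : RepSystem Λ) (x s : Γ) : Fin m → ℤ :=
  Multiplicative.toAdd (ψ ⟨x * s * (R.rep (x * s))⁻¹, R.rep_spec (x * s)⟩)

/-- The transfer homomorphism `θ(γ) = ∑_{x∈Δ} α(x,γ)`. -/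
def transfer (ψ : Λ ≃* Multiplicative (Fin m → ℤ)) (R : RepSystem Λ) (γ : Γ) : Fin m → ℤ :=
  ∑ x ∈ R.Δ, cocycle ψ R x γ

/-- `Φ(γ) = ψ(v)` where `γ = v·x`, `v ∈ Λ`, `x ∈ Δ`. -/
def Phi (ψ : Λ ≃* Multiplicative (Fin m → ℤ)) (R : RepSystem Λ) (γ : Γ) : Fin m → ℤ :=
  Multiplicative.toAdd (ψ ⟨γ * (R.rep γ)⁻¹, R.rep_spec γ⟩)

/-- A 1-form on the quotient diagram. -/
def IsOneForm (R : RepSystem Λ) (ω : Γ → Γ → ℝ) : Prop :=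
  ∀ x ∈ R.Δ, ∀ s : Γ, ω (R.rep (x * s)) s⁻¹ = -ω x s

/-- `χ(ω) = ∑_{x∈Δ} ∑_s c(x,s)·ω(x,s)` where `c(x,s) = μ(s)/#F`. -/
def chi (R : RepSystem Λ) (μ : Γ → ℝ) (ω : Γ → Γ → ℝ) : ℝ :=
  ∑ x ∈ R.Δ, ∑' s : Γ, μ s / (Λ.index : ℝ) * ω x s

/-- Square-integrability of a 1-form. -/
def SqInt (R : RepSystem Λ) (μ : Γ → ℝ) (ω : Γ → Γ → ℝ) : Prop :=
  ∀ x ∈ R.Δ, Summable (fun s : Γ => μ s / (Λ.index : ℝ) * ω x s ^ 2)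

/-- Harmonicity of a (square-integrable) 1-form. -/
def Harmonic (R : RepSystem Λ) (μ : Γ → ℝ) (ω : Γ → Γ → ℝ) : Prop :=
  SqInt R μ ω ∧ ∀ x ∈ R.Δ, (∑' s : Γ, μ s * ω x s) = chi R μ ω

/-- The differential `df(x,s) = f(x^s) − f(x)`. -/
def dd (R : RepSystem Λ) (f : Γ → ℝ) : Γ → Γ → ℝ := fun x s => f (R.rep (x * s)) - f x

/-- `(u, f)` is a harmonic decomposition of the 1-form `ω`: `ω = u + df` with `u`
a harmonic 1-form. -/
def IsHarmDecomp (R : RepSystem Λ) (μ : Γ → ℝ) (ω u : Γ → Γ → ℝ) (f : Γ → ℝ) : Prop :=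
  IsOneForm R u ∧ Harmonic R μ u ∧ ∀ x ∈ R.Δ, ∀ s : Γ, ω x s = u x s + dd R f x s

/-- The 1-form `v̂(x,s) = ⟨v, α(x,s)⟩` (standard inner product). -/
def vhat (ψ : Λ ≃* Multiplicative (Fin m → ℤ)) (R : RepSystem Λ) (v : Fin m → ℝ) :
    Γ → Γ → ℝ :=
  fun x s => ∑ i, v i * (cocycle ψ R x s i : ℝ)

/-- The 1-form `v̂(x,s) = B(v, α(x,s))` for a bilinear form `B`. -/
def vhatB (ψ : Λ ≃* Multiplicative (Fin m → ℤ)) (R : RepSystem Λ)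
    (B : (Fin m → ℝ) →ₗ[ℝ] (Fin m → ℝ) →ₗ[ℝ] ℝ) (v : Fin m → ℝ) : Γ → Γ → ℝ :=
  fun x s => B v (fun i => (cocycle ψ R x s i : ℝ))

/-- The drift `ζ = (1/#F)·∑_{x∈Δ}∑_s μ(s)·α(x,s) ∈ ℝ^m`. -/
def drift (ψ : Λ ≃* Multiplicative (Fin m → ℤ)) (R : RepSystem Λ) (μ : Γ → ℝ) : Fin m → ℝ :=
  fun i => (Λ.index : ℝ)⁻¹ * ∑ x ∈ R.Δ, ∑' s : Γ, μ s * (cocycle ψ R x s i : ℝ)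

/-- The covariance pairing `∑_{x,s} c(x,s)·u(x,s)·u'(x,s) − χ(u)·χ(u')`. -/
def cov (R : RepSystem Λ) (μ : Γ → ℝ) (u u' : Γ → Γ → ℝ) : ℝ :=
  (∑ x ∈ R.Δ, ∑' s : Γ, μ s / (Λ.index : ℝ) * (u x s * u' x s)) - chi R μ u * chi R μ u'

/-- The transfer operator `ℒ_v` acting on functions `Δ → ℂ`. -/
def transferOp (ψ : Λ ≃* Multiplicative (Fin m → ℤ)) (R : RepSystem Λ) (μ : Γ → ℝ)
    (v : Fin m → ℝ) (f : Γ → ℂ) : Γ → ℂ :=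
  fun x => ∑' s : Γ, (μ s : ℂ) *
    Complex.exp (2 * Real.pi * Complex.I * ((∑ i, v i * (cocycle ψ R x s i : ℝ)) : ℝ)) *
    f (R.rep (x * s))

/-- The Gaussian density `ξ_A(w)` associated with a (positive-definite) matrix `A`. -/
def gauss {d : ℕ} (A : Matrix (Fin d) (Fin d) ℝ) (w : Fin d → ℝ) : ℝ :=
  (2 * Real.pi) ^ (-(d : ℝ) / 2) * A.det ^ (-(1 : ℝ) / 2) *
    Real.exp (-(w ⬝ᵥ A⁻¹.mulVec w) / 2)

/-- The product representative system for `Λ₁ × Λ₂ ≤ Γ₁ × Γ₂`. -/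
def prodRep {Γ₁ : Type*} [Group Γ₁] {Γ₂ : Type*} [Group Γ₂]
    {Λ₁ : Subgroup Γ₁} {Λ₂ : Subgroup Γ₂}
    (R₁ : RepSystem Λ₁) (R₂ : RepSystem Λ₂) : RepSystem (Λ₁.prod Λ₂) where
  Δ := R₁.Δ ×ˢ R₂.Δ
  one_mem := Finset.mem_product.mpr ⟨R₁.one_mem, R₂.one_mem⟩
  rep := fun p => (R₁.rep p.1, R₂.rep p.2)
  rep_mem := fun p => Finset.mem_product.mpr ⟨R₁.rep_mem p.1, R₂.rep_mem p.2⟩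
  rep_spec := fun p => Subgroup.mem_prod.mpr ⟨R₁.rep_spec p.1, R₂.rep_spec p.2⟩
  rep_idem := fun x hx => by
    rcases Finset.mem_product.mp hx with ⟨h1, h2⟩
    exact Prod.ext_iff.mpr ⟨R₁.rep_idem x.1 h1, R₂.rep_idem x.2 h2⟩
  rep_coset := fun p v hv => by
    rcases Subgroup.mem_prod.mp hv with ⟨h1, h2⟩
    exact Prod.ext_iff.mpr ⟨R₁.rep_coset p.1 v.1 h1, R₂.rep_coset p.2 v.2 h2⟩

/-- The 1-form `𝐯̂(x,s) = ⟨𝐯, α(x,s)⟩` on a product, standard inner product. -/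
def vhat2 {Γ₁ : Type*} [Group Γ₁] {Γ₂ : Type*} [Group Γ₂]
    {Λ₁ : Subgroup Γ₁} {Λ₂ : Subgroup Γ₂} {m₁ m₂ : ℕ}
    (ψ₁ : Λ₁ ≃* Multiplicative (Fin m₁ → ℤ)) (R₁ : RepSystem Λ₁)
    (ψ₂ : Λ₂ ≃* Multiplicative (Fin m₂ → ℤ)) (R₂ : RepSystem Λ₂)
    (v : (Fin m₁ → ℝ) × (Fin m₂ → ℝ)) : (Γ₁ × Γ₂) → (Γ₁ × Γ₂) → ℝ :=
  fun x s => (∑ i, v.1 i * (cocycle ψ₁ R₁ x.1 s.1 i : ℝ)) +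
    ∑ i, v.2 i * (cocycle ψ₂ R₂ x.2 s.2 i : ℝ)

/-- The 1-form `𝐯̂(x,s) = ⟨𝐯, α(x,s)⟩` on a product, orthogonal-sum of the two
bilinear forms `B₁`, `B₂`. -/
def vhatB2 {Γ₁ : Type*} [Group Γ₁] {Γ₂ : Type*} [Group Γ₂]
    {Λ₁ : Subgroup Γ₁} {Λ₂ : Subgroup Γ₂} {m₁ m₂ : ℕ}
    (ψ₁ : Λ₁ ≃* Multiplicative (Fin m₁ → ℤ)) (R₁ : RepSystem Λ₁)
    (B₁ : (Fin m₁ → ℝ) →ₗ[ℝ] (Fin m₁ → ℝ) →ₗ[ℝ] ℝ)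
    (ψ₂ : Λ₂ ≃* Multiplicative (Fin m₂ → ℤ)) (R₂ : RepSystem Λ₂)
    (B₂ : (Fin m₂ → ℝ) →ₗ[ℝ] (Fin m₂ → ℝ) →ₗ[ℝ] ℝ)
    (v : (Fin m₁ → ℝ) × (Fin m₂ → ℝ)) : (Γ₁ × Γ₂) → (Γ₁ × Γ₂) → ℝ :=
  fun x s => B₁ v.1 (fun i => (cocycle ψ₁ R₁ x.1 s.1 i : ℝ)) +
    B₂ v.2 (fun i => (cocycle ψ₂ R₂ x.2 s.2 i : ℝ))

end

/-- The normalized transfer `θ̲ = (1/#F)·∑_{f∈F} Ad(f)` is the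
orthogonal projection of `ℝ^m` onto the span of the image of the transfer
homomorphism, for any Ad-invariant inner product. -/
theorem normalized_transfer_is_projection
    {Γ : Type*} [Group Γ] {Λ : Subgroup Γ} (hN : Λ.Normal) (hI : Λ.index ≠ 0)
    {m : ℕ} (hm : 1 ≤ m) (ψ : Λ ≃* Multiplicative (Fin m → ℤ)) (R : RepSystem Λ)
    (Ad : Γ ⧸ Λ → (Fin m → ℝ) →ₗ[ℝ] (Fin m → ℝ))
    (hAd : ∀ (x : Γ) (lam : Λ),
        Ad (QuotientGroup.mk x) (fun i => (Multiplicative.toAdd (ψ lam) i : ℝ)) =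
          fun i => (Multiplicative.toAdd
            (ψ ⟨x * (lam : Γ) * x⁻¹, hN.conj_mem (lam : Γ) lam.2 x⟩) i : ℝ))
    (B : (Fin m → ℝ) →ₗ[ℝ] (Fin m → ℝ) →ₗ[ℝ] ℝ)
    (hBsymm : ∀ u w : Fin m → ℝ, B u w = B w u)
    (hBpos : ∀ u : Fin m → ℝ, u ≠ 0 → 0 < B u u)
    (hBinv : ∀ (f : Γ ⧸ Λ) (u w : Fin m → ℝ), B (Ad f u) (Ad f w) = B u w)
    (T : (Fin m → ℝ) →ₗ[ℝ] (Fin m → ℝ))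
    (hT : ∀ v : Fin m → ℝ, T v = (Λ.index : ℝ)⁻¹ • ∑' f : Γ ⧸ Λ, Ad f v) :
    (∀ v : Fin m → ℝ, T (T v) = T v) ∧
    (∀ u w : Fin m → ℝ, B (T u) w = B u (T w)) ∧
    LinearMap.range T =
      Submodule.span ℝ ((fun z : Fin m → ℤ => fun i => (z i : ℝ)) ''
        Set.range (transfer ψ R)) := by
  classical
  haveI : Finite (Γ ⧸ Λ) := Nat.finite_of_card_ne_zero hI
  haveI : Fintype (Γ ⧸ Λ) := Fintype.ofFinite _
  -- basic notation
  set ι : (Fin m → ℤ) → (Fin m → ℝ) := fun z i => (z i : ℝ) with hιdef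
  set φ : Λ → (Fin m → ℤ) := fun l => Multiplicative.toAdd (ψ l) with hφdef
  set cnj : Γ → Λ → Λ := fun x l => ⟨x * (l : Γ) * x⁻¹, hN.conj_mem (l : Γ) l.2 x⟩ with hcnjdef
  set p : Γ → Λ := fun γ => ⟨γ * (R.rep γ)⁻¹, R.rep_spec γ⟩ with hpdef
  have hAd' : ∀ (x : Γ) (l : Λ), Ad (QuotientGroup.mk x) (ι (φ l)) = ι (φ (cnj x l)) :=
    fun x l => hAd x l
  have hφsurj : ∀ z : Fin m → ℤ, φ (ψ.symm (Multiplicative.ofAdd z)) = z := by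
    intro z; simp [hφdef]
  have hι_add : ∀ a b : Fin m → ℤ, ι (a + b) = ι a + ι b := by
    intro a b; funext i; simp [hιdef]
  have hι_sum : ∀ (s : Finset Γ) (F : Γ → Fin m → ℤ),
      ι (∑ x ∈ s, F x) = ∑ x ∈ s, ι (F x) := by
    intro s F; funext i; simp [hιdef, Finset.sum_apply]
  have hι_neg : ∀ a : Fin m → ℤ, ι (-a) = - ι a := by
    intro a; funext i; simp [hιdef]
  have hφ_mul : ∀ a b : Λ, φ (a * b) = φ a + φ b := by
    intro a b; simp [hφdef]
  have hφ_inv : ∀ a : Λ, φ a⁻¹ = - φ a := by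
    intro a; simp only [hφdef, map_inv, toAdd_inv]
  -- extensionality for linear maps via integer vectors
  have hext : ∀ (F G : (Fin m → ℝ) →ₗ[ℝ] (Fin m → ℝ)),
      (∀ z : Fin m → ℤ, F (ι z) = G (ι z)) → F = G := by
    intro F G h
    apply Module.Basis.ext (Pi.basisFun ℝ (Fin m))
    intro i
    have : (Pi.basisFun ℝ (Fin m)) i = ι (Pi.single i 1) := by
      funext j
      simp [Pi.basisFun_apply, hιdef, Pi.single_apply, apply_ite]
    rw [this]; exact h _
  have hcnj_cnj : ∀ (x y : Γ) (l : Λ), cnj x (cnj y l) = cnj (x * y) l := by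
    intro x y l
    apply Subtype.ext
    simp [hcnjdef, mul_assoc]
  have Ad_one : Ad (1 : Γ ⧸ Λ) = LinearMap.id := by
    apply hext
    intro z
    have h1 : (1 : Γ ⧸ Λ) = QuotientGroup.mk (1 : Γ) := rfl
    rw [h1, ← hφsurj z, hAd']
    have : cnj 1 (ψ.symm (Multiplicative.ofAdd z)) = ψ.symm (Multiplicative.ofAdd z) := by
      apply Subtype.ext; simp [hcnjdef]
    rw [this]; rfl
  have Ad_mul : ∀ f g : Γ ⧸ Λ, Ad (f * g) = (Ad f).comp (Ad g) := by
    intro f g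
    induction f using QuotientGroup.induction_on with
    | H x =>
    induction g using QuotientGroup.induction_on with
    | H y =>
    apply hext
    intro z
    have hmk : (QuotientGroup.mk x * QuotientGroup.mk y : Γ ⧸ Λ) = QuotientGroup.mk (x * y) := rfl
    rw [hmk, ← hφsurj z, hAd', LinearMap.comp_apply, hAd', hAd', hcnj_cnj]
  have Ad_cancel : ∀ (f : Γ ⧸ Λ) (w : Fin m → ℝ), Ad f (Ad f⁻¹ w) = w := by
    intro f w
    have := Ad_mul f f⁻¹
    rw [mul_inv_cancel, Ad_one] at this
    exact (congrArg (fun (L : (Fin m → ℝ) →ₗ[ℝ] (Fin m → ℝ)) => L w) this.symm)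
  -- finite sum form of T
  have hTsum : ∀ v : Fin m → ℝ, T v = (Λ.index : ℝ)⁻¹ • ∑ f : Γ ⧸ Λ, Ad f v := by
    intro v; rw [hT, tsum_fintype]
  have hcard : (Fintype.card (Γ ⧸ Λ) : ℝ) = (Λ.index : ℝ) := by
    rw [Subgroup.index, Nat.card_eq_fintype_card]
  have hIne : (Λ.index : ℝ) ≠ 0 := Nat.cast_ne_zero.mpr hI
  -- invariance of the averaged sum
  have hSinv : ∀ (g : Γ ⧸ Λ) (v : Fin m → ℝ),
      Ad g (∑ f : Γ ⧸ Λ, Ad f v) = ∑ f : Γ ⧸ Λ, Ad f v := by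
    intro g v
    rw [map_sum]
    have h1 : ∀ f : Γ ⧸ Λ, Ad g (Ad f v) = Ad (g * f) v := by
      intro f; rw [Ad_mul]; rfl
    simp_rw [h1]
    exact Fintype.sum_equiv (Equiv.mulLeft g) _ _ (fun f => rfl)
  have hTfix : ∀ v : Fin m → ℝ, (∀ f : Γ ⧸ Λ, Ad f v = v) → T v = v := by
    intro v hv
    rw [hTsum]
    simp_rw [hv]
    rw [Finset.sum_const, Finset.card_univ, ← Nat.cast_smul_eq_nsmul ℝ, smul_smul,
      hcard, inv_mul_cancel₀ hIne, one_smul]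
  -- Part 1
  have part1 : ∀ v : Fin m → ℝ, T (T v) = T v := by
    intro v
    apply hTfix
    intro f
    rw [hTsum, LinearMap.map_smul, hSinv, ← hTsum]
  -- Part 2
  have part2 : ∀ u w : Fin m → ℝ, B (T u) w = B u (T w) := by
    intro u w
    rw [hTsum u, hTsum w]
    rw [LinearMap.map_smul, map_sum, LinearMap.smul_apply, LinearMap.sum_apply,
      LinearMap.map_smul, map_sum, smul_eq_mul, smul_eq_mul]
    congr 1
    calc ∑ f : Γ ⧸ Λ, B (Ad f u) w
        = ∑ f : Γ ⧸ Λ, B u (Ad f⁻¹ w) := by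
          refine Finset.sum_congr rfl fun f _ => ?_
          conv_lhs => rw [← Ad_cancel f w]
          rw [hBinv]
      _ = ∑ f : Γ ⧸ Λ, B u (Ad f w) :=
          Fintype.sum_equiv (Equiv.inv _) _ _ (fun f => by simp)
  -- coset bookkeeping
  have rep_congr : ∀ {a b : Γ},
      (QuotientGroup.mk a : Γ ⧸ Λ) = QuotientGroup.mk b → R.rep a = R.rep b := by
    intro a b hab
    have hl : a⁻¹ * b ∈ Λ := QuotientGroup.eq.mp hab
    have hconj : b * (a⁻¹ * b)⁻¹ * b⁻¹ ∈ Λ := hN.conj_mem _ (Subgroup.inv_mem _ hl) b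
    have ha : a = (b * (a⁻¹ * b)⁻¹ * b⁻¹) * b := by group
    rw [ha, R.rep_coset b _ hconj]
  have mk_rep : ∀ γ : Γ, (QuotientGroup.mk (R.rep γ) : Γ ⧸ Λ) = QuotientGroup.mk γ := by
    intro γ
    apply QuotientGroup.eq.mpr
    have heq : (R.rep γ)⁻¹ * γ = (R.rep γ)⁻¹ * (γ * (R.rep γ)⁻¹) * ((R.rep γ)⁻¹)⁻¹ := by group
    rw [heq]
    exact hN.conj_mem _ (R.rep_spec γ) _
  have mem_delta_inj : ∀ x ∈ R.Δ, ∀ y ∈ R.Δ,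
      (QuotientGroup.mk x : Γ ⧸ Λ) = QuotientGroup.mk y → x = y := by
    intro x hx y hy hxy
    rw [← R.rep_idem x hx, ← R.rep_idem y hy]
    exact rep_congr hxy
  -- bijection between Δ and the quotient
  have sum_delta : ∀ (G : (Γ ⧸ Λ) → (Fin m → ℝ)),
      ∑ f : Γ ⧸ Λ, G f = ∑ x ∈ R.Δ, G (QuotientGroup.mk x) := by
    intro G
    refine (Finset.sum_nbij' (fun x : Γ => (QuotientGroup.mk x : Γ ⧸ Λ))
      (fun f : Γ ⧸ Λ => R.rep f.out)
      (fun x _ => Finset.mem_univ _) (fun f _ => R.rep_mem _) ?_ ?_ (fun x _ => rfl)).symm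
    · intro x hx
      apply mem_delta_inj _ (R.rep_mem _) _ hx
      show (QuotientGroup.mk (R.rep (Quotient.out (QuotientGroup.mk x))) : Γ ⧸ Λ) = _
      rw [mk_rep, QuotientGroup.out_eq']
    · intro f _
      show (QuotientGroup.mk (R.rep (Quotient.out f)) : Γ ⧸ Λ) = f
      rw [mk_rep, QuotientGroup.out_eq']
  -- cocycle as φ of p
  have cocycle_p : ∀ x s : Γ, cocycle ψ R x s = φ (p (x * s)) := fun x s => rfl
  -- Claim A : the transfer image is Ad-invariant
  have claimA : ∀ (g : Γ ⧸ Λ) (γ : Γ),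
      Ad g (ι (transfer ψ R γ)) = ι (transfer ψ R γ) := by
    intro g γ
    induction g using QuotientGroup.induction_on with
    | H g =>
    have key : ∀ x : Γ, cnj g (p (x * γ)) =
        p (g * x) * p (R.rep (g * x) * γ) * (p (g * R.rep (x * γ)))⁻¹ := by
      intro x
      have e1 : R.rep (R.rep (g * x) * γ) = R.rep (g * x * γ) := by
        apply rep_congr
        rw [QuotientGroup.mk_mul, mk_rep, ← QuotientGroup.mk_mul, mul_assoc]
      have e2 : R.rep (g * R.rep (x * γ)) = R.rep (g * x * γ) := by
        apply rep_congr
        rw [QuotientGroup.mk_mul, mk_rep, ← QuotientGroup.mk_mul, mul_assoc]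
      apply Subtype.ext
      simp only [hcnjdef, hpdef, Subgroup.coe_mul, Subgroup.coe_inv, e1, e2]
      group
    have step : ∀ x : Γ, Ad (QuotientGroup.mk g) (ι (cocycle ψ R x γ)) =
        ι (cocycle ψ R (R.rep (g * x)) γ) + ι (φ (p (g * x)))
          - ι (φ (p (g * R.rep (x * γ)))) := by
      intro x
      rw [cocycle_p, hAd', key x, hφ_mul, hφ_mul, hφ_inv, hι_add, hι_add, hι_neg]
      rw [cocycle_p]
      abel
    have hθ : ι (transfer ψ R γ) = ∑ x ∈ R.Δ, ι (cocycle ψ R x γ) := by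
      rw [transfer]; exact hι_sum _ _
    rw [hθ, map_sum]
    simp_rw [step]
    rw [Finset.sum_sub_distrib, Finset.sum_add_distrib]
    have bij1 : ∑ x ∈ R.Δ, ι (cocycle ψ R (R.rep (g * x)) γ)
        = ∑ x ∈ R.Δ, ι (cocycle ψ R x γ) := by
      refine Finset.sum_nbij' (fun x => R.rep (g * x)) (fun x => R.rep (g⁻¹ * x))
        (fun x _ => R.rep_mem _) (fun x _ => R.rep_mem _) ?_ ?_ (fun x _ => rfl)
      · intro x hx
        have hmk : (QuotientGroup.mk (g⁻¹ * R.rep (g * x)) : Γ ⧸ Λ) = QuotientGroup.mk x := by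
          rw [QuotientGroup.mk_mul, mk_rep, ← QuotientGroup.mk_mul, inv_mul_cancel_left]
        show R.rep (g⁻¹ * R.rep (g * x)) = x
        rw [rep_congr hmk, R.rep_idem x hx]
      · intro x hx
        have hmk : (QuotientGroup.mk (g * R.rep (g⁻¹ * x)) : Γ ⧸ Λ) = QuotientGroup.mk x := by
          rw [QuotientGroup.mk_mul, mk_rep, ← QuotientGroup.mk_mul, mul_inv_cancel_left]
        show R.rep (g * R.rep (g⁻¹ * x)) = x
        rw [rep_congr hmk, R.rep_idem x hx]
    have bij2 : ∑ x ∈ R.Δ, ι (φ (p (g * R.rep (x * γ))))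
        = ∑ x ∈ R.Δ, ι (φ (p (g * x))) := by
      refine Finset.sum_nbij' (fun x => R.rep (x * γ)) (fun x => R.rep (x * γ⁻¹))
        (fun x _ => R.rep_mem _) (fun x _ => R.rep_mem _) ?_ ?_ (fun x _ => rfl)
      · intro x hx
        have hmk : (QuotientGroup.mk (R.rep (x * γ) * γ⁻¹) : Γ ⧸ Λ) = QuotientGroup.mk x := by
          rw [QuotientGroup.mk_mul, mk_rep, ← QuotientGroup.mk_mul, mul_inv_cancel_right]
        show R.rep (R.rep (x * γ) * γ⁻¹) = x
        rw [rep_congr hmk, R.rep_idem x hx]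
      · intro x hx
        have hmk : (QuotientGroup.mk (R.rep (x * γ⁻¹) * γ) : Γ ⧸ Λ) = QuotientGroup.mk x := by
          rw [QuotientGroup.mk_mul, mk_rep, ← QuotientGroup.mk_mul, inv_mul_cancel_right]
        show R.rep (R.rep (x * γ⁻¹) * γ) = x
        rw [rep_congr hmk, R.rep_idem x hx]
    rw [bij1, bij2]
    abel
  -- Claim B : T (ι (φ l)) is 1/#F times the transfer of l
  have claimB : ∀ l : Λ, T (ι (φ l)) = (Λ.index : ℝ)⁻¹ • ι (transfer ψ R ((l : Γ))) := by
    intro l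
    rw [hTsum]
    congr 1
    rw [sum_delta (fun f => Ad f (ι (φ l)))]
    have hθ : ι (transfer ψ R (l : Γ)) = ∑ x ∈ R.Δ, ι (cocycle ψ R x (l : Γ)) := by
      rw [transfer]; exact hι_sum _ _
    rw [hθ]
    refine Finset.sum_congr rfl fun x hx => ?_
    rw [hAd', cocycle_p]
    have hmk : (QuotientGroup.mk (x * (l : Γ)) : Γ ⧸ Λ) = QuotientGroup.mk x := by
      apply QuotientGroup.eq.mpr
      have heq : (x * (l : Γ))⁻¹ * x = ((l : Γ))⁻¹ := by group
      rw [heq]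
      exact Subgroup.inv_mem _ l.2
    have hrep : R.rep (x * (l : Γ)) = x := by rw [rep_congr hmk, R.rep_idem x hx]
    have hpc : cnj x l = p (x * (l : Γ)) := by
      apply Subtype.ext
      simp [hcnjdef, hpdef, hrep]
    rw [hpc]
  -- Part 3
  have part3 : LinearMap.range T =
      Submodule.span ℝ ((fun z : Fin m → ℤ => fun i => (z i : ℝ)) ''
        Set.range (transfer ψ R)) := by
    apply le_antisymm
    · rintro w ⟨v, rfl⟩
      have hv : v = ∑ i : Fin m, v i • ι (Pi.single i 1) := by
        funext j
        simp [hιdef, Finset.sum_apply, Pi.single_apply, apply_ite,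
          Finset.sum_ite_eq', mul_comm]
      rw [hv, map_sum]
      apply Submodule.sum_mem
      intro i _
      rw [LinearMap.map_smul]
      apply Submodule.smul_mem
      rw [← hφsurj (Pi.single i 1), claimB]
      apply Submodule.smul_mem
      apply Submodule.subset_span
      exact ⟨transfer ψ R _, Set.mem_range_self _, rfl⟩
    · rw [Submodule.span_le]
      rintro w ⟨z, ⟨γ, rfl⟩, rfl⟩
      exact ⟨ι (transfer ψ R γ), hTfix _ (fun f => claimA f γ)⟩
  exact ⟨part1, part2, part3⟩


end NSVA
end

section
/- Let μ be a non-degenerate probability measure on Γ. Then every square-integrable 1-form ω on (Γ, Λ, Δ, μ) decomposes as ω = u + df where u is a harmonic 1-form and f : Δ → ℝ; the harmonic part is unique (if u + df = u' + df' with u, u' harmonic 1-forms and f, f' : Δ → ℝ, then u = u' on all of Δ×Γ); and moreover χ(ω) = χ(u). -/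
open scoped BigOperators Classical
open Filter Matrix MeasureTheory

namespace NSVA

section HarmDecompAux

open Finset

variable {Γ : Type*} [Group Γ] {Λ : Subgroup Γ}

lemma hd_rep_rep (R : RepSystem Λ) (a b : Γ) :
    R.rep (R.rep a * b) = R.rep (a * b) := by
  have key : R.rep a * b = (a * (R.rep a)⁻¹)⁻¹ * (a * b) := by group
  rw [key, R.rep_coset _ _ (Λ.inv_mem (R.rep_spec a))]

/-- The action of `Γ` on the coset representatives. -/
def hdAct (R : RepSystem Λ) (s : Γ) (x : {a : Γ // a ∈ R.Δ}) : {a : Γ // a ∈ R.Δ} :=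
  ⟨R.rep (↑x * s), R.rep_mem _⟩

lemma hdAct_hdAct (R : RepSystem Λ) (s t : Γ) (x : {a : Γ // a ∈ R.Δ}) :
    hdAct R t (hdAct R s x) = hdAct R (s * t) x := by
  apply Subtype.ext
  show R.rep (R.rep (↑x * s) * t) = R.rep (↑x * (s * t))
  rw [hd_rep_rep, mul_assoc]

lemma hdAct_inv (R : RepSystem Λ) (s : Γ) (x : {a : Γ // a ∈ R.Δ}) :
    hdAct R s⁻¹ (hdAct R s x) = x := by
  rw [hdAct_hdAct, mul_inv_cancel]
  apply Subtype.ext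
  show R.rep (↑x * 1) = ↑x
  rw [mul_one, R.rep_idem _ x.2]

/-- `hdAct R s` as an equivalence. -/
def hdActEquiv (R : RepSystem Λ) (s : Γ) : {a : Γ // a ∈ R.Δ} ≃ {a : Γ // a ∈ R.Δ} where
  toFun := hdAct R s
  invFun := hdAct R s⁻¹
  left_inv x := hdAct_inv R s x
  right_inv x := by
    have := hdAct_inv R s⁻¹ x
    rwa [inv_inv] at this

lemma hd_card (hN : Λ.Normal) (R : RepSystem Λ) : R.Δ.card = Λ.index := by
  have hbij : Function.Bijective
      (fun x : {a : Γ // a ∈ R.Δ} => (QuotientGroup.mk ↑x : Γ ⧸ Λ)) := by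
    constructor
    · intro x y hxy
      rw [QuotientGroup.eq] at hxy
      have h2 : (↑y * (↑x)⁻¹ : Γ) ∈ Λ := by
        have := hN.conj_mem _ hxy ↑x
        have e : (↑x * ((↑x)⁻¹ * ↑y) * (↑x)⁻¹ : Γ) = ↑y * (↑x)⁻¹ := by group
        rwa [e] at this
      have h3 : R.rep ((↑y * (↑x)⁻¹) * ↑x) = R.rep ↑x := R.rep_coset _ _ h2
      have e2 : ((↑y * (↑x)⁻¹) * ↑x : Γ) = ↑y := by group
      rw [e2, R.rep_idem _ y.2, R.rep_idem _ x.2] at h3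
      exact Subtype.ext h3.symm
    · intro q
      obtain ⟨γ, rfl⟩ := QuotientGroup.mk_surjective q
      refine ⟨⟨R.rep γ, R.rep_mem γ⟩, ?_⟩
      show (QuotientGroup.mk (R.rep γ) : Γ ⧸ Λ) = QuotientGroup.mk γ
      rw [QuotientGroup.eq]
      have hv := R.rep_spec γ
      have := hN.conj_mem _ hv γ⁻¹
      have e : (γ⁻¹ * (γ * (R.rep γ)⁻¹) * γ⁻¹⁻¹ : Γ) = (R.rep γ)⁻¹ * γ := by group
      rwa [e] at this
  calc R.Δ.card = Nat.card {a : Γ // a ∈ R.Δ} := by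
        rw [Nat.card_eq_fintype_card, Fintype.card_coe]
    _ = Nat.card (Γ ⧸ Λ) := Nat.card_eq_of_bijective _ hbij
    _ = Λ.index := rfl

variable {μ : Γ → ℝ}

lemma hd_summable_mul_bdd (hμ : IsProb μ) {a : Γ → ℝ} {C : ℝ} (hC : ∀ s, |a s| ≤ C) :
    Summable fun s => μ s * a s := by
  apply Summable.of_abs
  apply Summable.of_nonneg_of_le (fun s => abs_nonneg _) (fun s => ?_)
    (hμ.2.summable.mul_right C)
  rw [abs_mul, abs_of_nonneg (hμ.1 s)]
  exact mul_le_mul_of_nonneg_left (hC s) (hμ.1 s)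

lemma hd_summable_mul_abs (hμ : IsProb μ) {a : Γ → ℝ}
    (h : Summable fun s => μ s * a s ^ 2) :
    Summable fun s => μ s * |a s| := by
  apply Summable.of_nonneg_of_le (fun s => mul_nonneg (hμ.1 s) (abs_nonneg _))
    (fun s => ?_) (hμ.2.summable.add h)
  have h1 : |a s| ≤ 1 + a s ^ 2 := by nlinarith [sq_nonneg (|a s| - 1), sq_abs (a s)]
  nlinarith [hμ.1 s]

lemma hd_summable_mul_of_sq (hμ : IsProb μ) {a : Γ → ℝ}
    (h : Summable fun s => μ s * a s ^ 2) :
    Summable fun s => μ s * a s := by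
  apply Summable.of_abs
  apply Summable.congr (hd_summable_mul_abs hμ h)
  intro s
  rw [abs_mul, abs_of_nonneg (hμ.1 s)]

variable (R : RepSystem Λ)

instance hdNonempty : Nonempty {a : Γ // a ∈ R.Δ} := ⟨⟨1, R.one_mem⟩⟩

lemma hd_abs_le_sum (g : {a : Γ // a ∈ R.Δ} → ℝ) (z : {a : Γ // a ∈ R.Δ}) :
    |g z| ≤ ∑ y, |g y| :=
  Finset.single_le_sum (fun i _ => abs_nonneg (g i)) (Finset.mem_univ z)

lemma hd_summable_act (hμ : IsProb μ) (g : {a : Γ // a ∈ R.Δ} → ℝ)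
    (x : {a : Γ // a ∈ R.Δ}) :
    Summable fun s : Γ => μ s * g (hdAct R s x) :=
  hd_summable_mul_bdd hμ (fun s => hd_abs_le_sum R g (hdAct R s x))

/-- The Markov operator minus identity, `(T g)(x) = ∑_s μ(s) g(x^s) − g(x)`. -/
noncomputable def hdT (R : RepSystem Λ) (μ : Γ → ℝ) (hμ : IsProb μ) :
    ({a : Γ // a ∈ R.Δ} → ℝ) →ₗ[ℝ] ({a : Γ // a ∈ R.Δ} → ℝ) where
  toFun g := fun x => (∑' s : Γ, μ s * g (hdAct R s x)) - g x
  map_add' g h := by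
    funext x
    have key : ∑' s : Γ, μ s * (g (hdAct R s x) + h (hdAct R s x))
        = (∑' s : Γ, μ s * g (hdAct R s x)) + ∑' s : Γ, μ s * h (hdAct R s x) := by
      rw [← Summable.tsum_add (hd_summable_act R hμ g x) (hd_summable_act R hμ h x)]
      exact tsum_congr fun s => by ring
    simp only [Pi.add_apply]
    rw [key]; ring
  map_smul' c g := by
    funext x
    have key : ∑' s : Γ, μ s * (c * g (hdAct R s x))
        = c * ∑' s : Γ, μ s * g (hdAct R s x) := by
      rw [← tsum_mul_left]
      exact tsum_congr fun s => by ring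
    simp only [Pi.smul_apply, smul_eq_mul, RingHom.id_apply]
    rw [key]; ring

lemma hdT_apply (hμ : IsProb μ) (g : {a : Γ // a ∈ R.Δ} → ℝ) (x : {a : Γ // a ∈ R.Δ}) :
    hdT R μ hμ g x = (∑' s : Γ, μ s * g (hdAct R s x)) - g x := rfl

lemma hd_sum_T (hμ : IsProb μ) (g : {a : Γ // a ∈ R.Δ} → ℝ) :
    ∑ x, hdT R μ hμ g x = 0 := by
  simp only [hdT_apply]
  rw [Finset.sum_sub_distrib]
  have h1 : ∑ x, ∑' s : Γ, μ s * g (hdAct R s x)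
      = ∑' s : Γ, ∑ x, μ s * g (hdAct R s x) :=
    (Summable.tsum_finsetSum (fun x _ => hd_summable_act R hμ g x)).symm
  have h2 : ∀ s : Γ, ∑ x, μ s * g (hdAct R s x) = μ s * ∑ x, g x := by
    intro s
    rw [← Finset.mul_sum]
    congr 1
    exact Equiv.sum_comp (hdActEquiv R s) g
  rw [h1, tsum_congr h2, tsum_mul_right, hμ.2.tsum_eq, one_mul, sub_self]

lemma hd_const_of_fixed (hμ : IsProb μ) (hnd : Nondeg μ) (g : {a : Γ // a ∈ R.Δ} → ℝ)
    (hfix : ∀ x, (∑' s : Γ, μ s * g (hdAct R s x)) = g x) :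
    ∀ x y, g x = g y := by
  obtain ⟨x₀, -, hx₀⟩ := Finset.exists_max_image (Finset.univ) g ⟨_, Finset.mem_univ (Classical.arbitrary _)⟩
  have hx₀' : ∀ z, g z ≤ g x₀ := fun z => hx₀ z (Finset.mem_univ z)
  have key : ∀ x, g x = g x₀ → ∀ s : Γ, 0 < μ s → g (hdAct R s x) = g x₀ := by
    intro x hx s hs
    by_contra hne
    have hlt : g (hdAct R s x) < g x₀ := lt_of_le_of_ne (hx₀' _) hne
    have hsum : Summable fun s' : Γ => μ s' * (g x₀ - g (hdAct R s' x)) :=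
      hd_summable_act R hμ (fun y => g x₀ - g y) x
    have htsum : ∑' s' : Γ, μ s' * (g x₀ - g (hdAct R s' x)) = 0 := by
      have e : (fun s' : Γ => μ s' * (g x₀ - g (hdAct R s' x)))
          = fun s' => μ s' * g x₀ - μ s' * g (hdAct R s' x) := funext fun _ => by ring
      rw [e, Summable.tsum_sub (hμ.2.summable.mul_right _) (hd_summable_act R hμ g x),
        tsum_mul_right, hμ.2.tsum_eq, one_mul, hfix x, hx, sub_self]
    have hterm : μ s * (g x₀ - g (hdAct R s x)) ≤ 0 := by
      rw [← htsum]
      exact Summable.le_tsum hsum s (fun j _ => mul_nonneg (hμ.1 j) (sub_nonneg.2 (hx₀' _)))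
    nlinarith
  have main : ∀ γ : Γ, γ ∈ Subsemigroup.closure {x : Γ | 0 < μ x} →
      ∀ x, g x = g x₀ → g (hdAct R γ x) = g x₀ := by
    intro γ hγ
    induction hγ using Subsemigroup.closure_induction with
    | mem s hs => exact fun x hx => key x hx s hs
    | mul a b ha hb iha ihb =>
      intro x hx
      rw [← hdAct_hdAct]
      exact ihb _ (iha _ hx)
  have hconst : ∀ y, g y = g x₀ := by
    intro y
    have hy : hdAct R ((↑x₀)⁻¹ * ↑y) x₀ = y := by
      apply Subtype.ext
      show R.rep (↑x₀ * ((↑x₀)⁻¹ * ↑y)) = ↑y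
      rw [mul_inv_cancel_left, R.rep_idem _ y.2]
    have := main _ (hnd ((↑x₀)⁻¹ * ↑y)) x₀ rfl
    rwa [hy] at this
  intro x y
  rw [hconst x, hconst y]

lemma hd_exists_solution (hμ : IsProb μ) (hnd : Nondeg μ) (b : {a : Γ // a ∈ R.Δ} → ℝ)
    (hb : ∑ x, b x = 0) : ∃ g, ∀ x, hdT R μ hμ g x = b x := by
  classical
  let Ssum : ({a : Γ // a ∈ R.Δ} → ℝ) →ₗ[ℝ] ℝ :=
    { toFun := fun g => ∑ x, g x
      map_add' := fun g h => by simp [Finset.sum_add_distrib]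
      map_smul' := fun c g => by simp [Finset.mul_sum] }
  have hrange : ∀ g, hdT R μ hμ g ∈ LinearMap.ker Ssum := fun g => by
    simp only [LinearMap.mem_ker]
    show ∑ x, hdT R μ hμ g x = 0
    exact hd_sum_T R hμ g
  let T' : LinearMap.ker Ssum →ₗ[ℝ] LinearMap.ker Ssum :=
    (hdT R μ hμ).restrict (fun g _ => hrange g)
  have hinj : Function.Injective T' := by
    rw [← LinearMap.ker_eq_bot, LinearMap.ker_eq_bot']
    rintro ⟨g, hg⟩ hTg
    have hT0 : hdT R μ hμ g = 0 := congrArg Subtype.val hTg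
    have hfix : ∀ x, (∑' s : Γ, μ s * g (hdAct R s x)) = g x := by
      intro x
      have := congrFun hT0 x
      rw [hdT_apply] at this
      have : (∑' s : Γ, μ s * g (hdAct R s x)) - g x = 0 := this
      linarith
    have hconst := hd_const_of_fixed R hμ hnd g hfix
    have hsum : ∑ x, g x = 0 := hg
    have hcard : (0 : ℕ) < Fintype.card {a : Γ // a ∈ R.Δ} := Fintype.card_pos
    apply Subtype.ext
    funext y
    show g y = 0
    have hsum' : ∑ x : {a : Γ // a ∈ R.Δ}, g y = 0 := by
      rw [← hsum]
      exact (Finset.sum_congr rfl (fun x _ => (hconst y x).symm)).symm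
    rw [Finset.sum_const, Finset.card_univ, nsmul_eq_mul] at hsum'
    have hne : (Fintype.card {a : Γ // a ∈ R.Δ} : ℝ) ≠ 0 := by positivity
    exact (mul_eq_zero.mp hsum').resolve_left hne
  have hsurj := (LinearMap.injective_iff_surjective).mp hinj
  obtain ⟨⟨g, hg⟩, hTg⟩ := hsurj ⟨b, by simpa [Ssum, LinearMap.mem_ker] using hb⟩
  refine ⟨g, fun x => ?_⟩
  have : hdT R μ hμ g = b := congrArg Subtype.val hTg
  exact congrFun this x

lemma hd_chi_eq (ω : Γ → Γ → ℝ) :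
    chi R μ ω = (Λ.index : ℝ)⁻¹ * ∑ x : {a : Γ // a ∈ R.Δ}, ∑' s : Γ, μ s * ω ↑x s := by
  unfold chi
  rw [Finset.mul_sum, ← Finset.sum_coe_sort R.Δ (fun x => ∑' s : Γ, μ s / (Λ.index : ℝ) * ω x s)]
  apply Finset.sum_congr rfl
  intro x _
  rw [← tsum_mul_left]
  exact tsum_congr fun s => by rw [div_eq_mul_inv]; ring

end HarmDecompAux

/-- Every square-integrable 1-form decomposes as `ω = u + df` with `u`
a harmonic 1-form; the harmonic part is unique, and `χ(ω) = χ(u)`. -/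
theorem harmonic_decomposition
    {Γ : Type*} [Group Γ] [Countable Γ] {Λ : Subgroup Γ} (hN : Λ.Normal)
    (hI : Λ.index ≠ 0) {m : ℕ} (hm : 1 ≤ m) (ψ : Λ ≃* Multiplicative (Fin m → ℤ))
    (R : RepSystem Λ) (μ : Γ → ℝ) (hμ : IsProb μ) (hnd : Nondeg μ)
    (ω : Γ → Γ → ℝ) (hω : IsOneForm R ω) (hsq : SqInt R μ ω) :
    (∃ (u : Γ → Γ → ℝ) (f : Γ → ℝ),
        IsHarmDecomp R μ ω u f ∧ chi R μ ω = chi R μ u) ∧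
    (∀ (u u' : Γ → Γ → ℝ) (f f' : Γ → ℝ),
        IsHarmDecomp R μ ω u f → IsHarmDecomp R μ ω u' f' →
        ∀ x ∈ R.Δ, ∀ s : Γ, u x s = u' x s) := by
  classical
  have hF : ((Λ.index : ℝ)) ≠ 0 := Nat.cast_ne_zero.mpr hI
  have hcard : (Fintype.card {a : Γ // a ∈ R.Δ} : ℝ) = (Λ.index : ℝ) := by
    rw [Fintype.card_coe, hd_card hN R]
  have hsq2 : ∀ (v : Γ → Γ → ℝ), SqInt R μ v → ∀ x : {a : Γ // a ∈ R.Δ},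
      Summable fun s : Γ => μ s * v ↑x s ^ 2 := by
    intro v hv x
    apply Summable.congr ((hv ↑x x.2).mul_left (Λ.index : ℝ))
    intro s
    field_simp
  have hsum1 : ∀ (v : Γ → Γ → ℝ), SqInt R μ v → ∀ x : {a : Γ // a ∈ R.Δ},
      Summable fun s : Γ => μ s * v ↑x s :=
    fun v hv x => hd_summable_mul_of_sq hμ (hsq2 v hv x)
  have hddsum : ∀ (h : {a : Γ // a ∈ R.Δ} → ℝ) (x : {a : Γ // a ∈ R.Δ}),
      Summable fun s : Γ => μ s * (h (hdAct R s x) - h x) := by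
    intro h x
    exact hd_summable_act R hμ (fun y => h y - h x) x
  have hddtsum : ∀ (h : {a : Γ // a ∈ R.Δ} → ℝ) (x : {a : Γ // a ∈ R.Δ}),
      (∑' s : Γ, μ s * (h (hdAct R s x) - h x)) = hdT R μ hμ h x := by
    intro h x
    rw [hdT_apply]
    have e : (fun s : Γ => μ s * (h (hdAct R s x) - h x))
        = fun s => μ s * h (hdAct R s x) - μ s * h x := funext fun s => by ring
    rw [e, Summable.tsum_sub (hd_summable_act R hμ h x) (hμ.2.summable.mul_right _),
      tsum_mul_right, hμ.2.tsum_eq, one_mul]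
  constructor
  · -- existence
    set S : {a : Γ // a ∈ R.Δ} → ℝ := fun x => ∑' s : Γ, μ s * ω ↑x s with hS
    have hchiω : chi R μ ω = (Λ.index : ℝ)⁻¹ * ∑ x, S x := hd_chi_eq R ω
    set b : {a : Γ // a ∈ R.Δ} → ℝ := fun x => S x - chi R μ ω with hbdef
    have hb : ∑ x, b x = 0 := by
      rw [hbdef]
      rw [Finset.sum_sub_distrib, Finset.sum_const, Finset.card_univ, nsmul_eq_mul,
        hcard, hchiω]
      field_simp
      ring
    obtain ⟨g, hg⟩ := hd_exists_solution R hμ hnd b hb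
    set f : Γ → ℝ := fun γ => g ⟨R.rep γ, R.rep_mem γ⟩ with hfdef
    have hfΔ : ∀ x : {a : Γ // a ∈ R.Δ}, f ↑x = g x := by
      intro x
      apply congrArg g
      exact Subtype.ext (R.rep_idem _ x.2)
    have hfrep : ∀ (x : {a : Γ // a ∈ R.Δ}) (s : Γ),
        f (R.rep (↑x * s)) = g (hdAct R s x) := by
      intro x s
      apply congrArg g
      exact Subtype.ext (R.rep_idem _ (R.rep_mem _))
    have hdd : ∀ (x : {a : Γ // a ∈ R.Δ}) (s : Γ),
        dd R f ↑x s = g (hdAct R s x) - g x := by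
      intro x s
      show f (R.rep (↑x * s)) - f ↑x = _
      rw [hfrep, hfΔ]
    set u : Γ → Γ → ℝ := fun x s => ω x s - dd R f x s with hudef
    have hpt : ∀ x : {a : Γ // a ∈ R.Δ}, (∑' s : Γ, μ s * u ↑x s) = chi R μ ω := by
      intro x
      have e : (fun s : Γ => μ s * u ↑x s)
          = fun s => μ s * ω ↑x s - μ s * ((fun y => g y - g x) (hdAct R s x)) := by
        funext s
        simp only [hudef]
        rw [hdd x s]
        ring
      rw [e, Summable.tsum_sub (hsum1 ω hsq x) (hd_summable_act R hμ (fun y => g y - g x) x)]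
      have e2 : (∑' s : Γ, μ s * ((fun y => g y - g x) (hdAct R s x))) = hdT R μ hμ g x := by
        rw [← hddtsum g x]
      rw [e2, hg x, hbdef]
      show S x - (S x - chi R μ ω) = chi R μ ω
      ring
    have hsqu : SqInt R μ u := by
      intro x hx
      have hx' : x = ↑(⟨x, hx⟩ : {a : Γ // a ∈ R.Δ}) := rfl
      set x' : {a : Γ // a ∈ R.Δ} := ⟨x, hx⟩ with hx'def
      have habs : ∀ s : Γ, |dd R f x s| ≤ 2 * ∑ y, |g y| := by
        intro s
        have : dd R f x s = g (hdAct R s x') - g x' := hdd x' s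
        rw [this]
        have h1 := hd_abs_le_sum R g (hdAct R s x')
        have h2 := hd_abs_le_sum R g x'
        have h3 : |g (hdAct R s x') - g x'| ≤ |g (hdAct R s x')| + |g x'| := abs_sub _ _
        linarith
      have hd2 : Summable fun s : Γ => μ s * dd R f x s ^ 2 := by
        apply hd_summable_mul_bdd hμ (C := (2 * ∑ y, |g y|) ^ 2)
        intro s
        have h1 := habs s
        have h2 := abs_nonneg (dd R f x s)
        rw [abs_of_nonneg (sq_nonneg _)]
        nlinarith [sq_abs (dd R f x s)]
      have hω2 : Summable fun s : Γ => μ s * ω x s ^ 2 := hsq2 ω hsq x'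
      have hωd : Summable fun s : Γ => μ s * (ω x s * dd R f x s) := by
        apply Summable.of_abs
        apply Summable.of_nonneg_of_le (fun s => abs_nonneg _) (fun s => ?_)
          ((hd_summable_mul_abs hμ (hsq2 ω hsq x')).mul_right (2 * ∑ y, |g y|))
        rw [abs_mul, abs_of_nonneg (hμ.1 s), abs_mul, ← mul_assoc]
        exact mul_le_mul_of_nonneg_left (habs s)
          (mul_nonneg (hμ.1 s) (abs_nonneg _))
      apply Summable.congr (((hω2.sub (hωd.mul_left 2)).add hd2).mul_left (Λ.index : ℝ)⁻¹)
      intro s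
      simp only [hudef]
      rw [div_eq_mul_inv]
      ring
    have hchiu : chi R μ u = chi R μ ω := by
      rw [hd_chi_eq R u]
      have e : ∑ x : {a : Γ // a ∈ R.Δ}, (∑' s : Γ, μ s * u ↑x s)
          = ∑ x : {a : Γ // a ∈ R.Δ}, chi R μ ω :=
        Finset.sum_congr rfl fun x _ => hpt x
      rw [e, Finset.sum_const, Finset.card_univ, nsmul_eq_mul, hcard]
      field_simp
    refine ⟨u, f, ⟨?_, ⟨hsqu, ?_⟩, ?_⟩, hchiu.symm⟩
    · -- one-form
      intro x hx s
      show ω (R.rep (x * s)) s⁻¹ - dd R f (R.rep (x * s)) s⁻¹ = -(ω x s - dd R f x s)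
      rw [hω x hx s]
      have e1 : dd R f (R.rep (x * s)) s⁻¹ = -dd R f x s := by
        show f (R.rep (R.rep (x * s) * s⁻¹)) - f (R.rep (x * s))
            = -(f (R.rep (x * s)) - f x)
        rw [hd_rep_rep, mul_inv_cancel_right, R.rep_idem x hx]
        ring
      rw [e1]
      ring
    · -- harmonicity identity
      intro x hx
      rw [hchiu]
      exact hpt ⟨x, hx⟩
    · -- decomposition
      intro x hx s
      simp only [hudef]
      ring
  · -- uniqueness
    rintro u u' f f' ⟨h1, ⟨hsi, hha⟩, he⟩ ⟨h1', ⟨hsi', hha'⟩, he'⟩ x hx s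
    set h : {a : Γ // a ∈ R.Δ} → ℝ := fun y => f ↑y - f' ↑y with hhdef
    have hdiff : ∀ (y : {a : Γ // a ∈ R.Δ}) (t : Γ),
        u' ↑y t - u ↑y t = h (hdAct R t y) - h y := by
      intro y t
      have e1 := he ↑y y.2 t
      have e2 := he' ↑y y.2 t
      have e3 : u ↑y t + (f (R.rep (↑y * t)) - f ↑y)
          = u' ↑y t + (f' (R.rep (↑y * t)) - f' ↑y) := by
        have := e1.symm.trans e2
        simpa [dd] using this
      show _ = (f (R.rep (↑y * t)) - f' (R.rep (↑y * t))) - (f ↑y - f' ↑y)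
      linarith
    have hT : ∀ y : {a : Γ // a ∈ R.Δ}, hdT R μ hμ h y = chi R μ u' - chi R μ u := by
      intro y
      rw [← hddtsum h y]
      have e : (fun t : Γ => μ t * (h (hdAct R t y) - h y))
          = fun t => μ t * u' ↑y t - μ t * u ↑y t :=
        funext fun t => by rw [← hdiff y t]; ring
      rw [e, Summable.tsum_sub (hsum1 u' hsi' y) (hsum1 u hsi y), hha' ↑y y.2, hha ↑y y.2]
    have hzero : chi R μ u' - chi R μ u = 0 := by
      have h0 := hd_sum_T R hμ h
      rw [Finset.sum_congr rfl (fun y _ => hT y), Finset.sum_const,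
        Finset.card_univ, nsmul_eq_mul, hcard] at h0
      exact (mul_eq_zero.mp h0).resolve_left hF
    have hfix : ∀ y, (∑' t : Γ, μ t * h (hdAct R t y)) = h y := by
      intro y
      have hy := hT y
      rw [hzero, hdT_apply] at hy
      linarith
    have hconst := hd_const_of_fixed R hμ hnd h hfix
    have hmain := hdiff ⟨x, hx⟩ s
    rw [hconst (hdAct R s ⟨x, hx⟩) ⟨x, hx⟩] at hmain
    have : u' x s - u x s = 0 := by simpa using hmain
    linarith

end NSVA
end

section
/- If the probability measure μ on Γ has finite second moment, then for every v ∈ ℝ^m: (i) the 1-form v̂ is square-integrable, i.e. ∑_{x∈Δ}∑_{s∈Γ} μ(s)·⟨v, α(x,s)⟩² < ∞; (ii) ∑_{x∈Δ}∑_{s∈Γ} μ(s)·‖α(x,s)‖ < ∞, so the drift ζ := (1/#F)·∑_{x∈Δ}∑_{s∈Γ} μ(s)·α(x,s) ∈ ℝ^m is well defined (absolutely convergent); and (iii) χ(v̂) = ⟨v, ζ⟩. -/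
open scoped BigOperators Classical
open Filter Matrix MeasureTheory

namespace NSVA

section AuxProofs

variable {Γ : Type*} [Group Γ] {Λ : Subgroup Γ} {m : ℕ}

lemma rep_rep_mul (R : RepSystem Λ) (x s t : Γ) :
    R.rep (R.rep (x * s) * t) = R.rep (x * s * t) := by
  have h := R.rep_coset (R.rep (x * s) * t)
    (x * s * (R.rep (x * s))⁻¹) (R.rep_spec (x * s))
  rw [show x * s * (R.rep (x * s))⁻¹ * (R.rep (x * s) * t) = x * s * t by group] at h
  exact h.symm

lemma cocycle_mul (ψ : Λ ≃* Multiplicative (Fin m → ℤ)) (R : RepSystem Λ) (x s t : Γ) :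
    cocycle ψ R x (s * t) = cocycle ψ R x s + cocycle ψ R (R.rep (x * s)) t := by
  have key : (⟨x * (s * t) * (R.rep (x * (s * t)))⁻¹, R.rep_spec _⟩ : Λ) =
      (⟨x * s * (R.rep (x * s))⁻¹, R.rep_spec _⟩ : Λ) *
      ⟨R.rep (x * s) * t * (R.rep (R.rep (x * s) * t))⁻¹, R.rep_spec _⟩ := by
    ext
    simp only [Subgroup.coe_mul]
    rw [rep_rep_mul, ← mul_assoc x s t]
    group
  unfold cocycle
  rw [key, _root_.map_mul, toAdd_mul]

lemma cocycle_one (ψ : Λ ≃* Multiplicative (Fin m → ℤ)) (R : RepSystem Λ)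
    {x : Γ} (hx : x ∈ R.Δ) : cocycle ψ R x 1 = 0 := by
  unfold cocycle
  have : (⟨x * 1 * (R.rep (x * 1))⁻¹, R.rep_spec _⟩ : Λ) = 1 := by
    ext; simp [R.rep_idem x hx]
  rw [this, _root_.map_one]
  rfl

lemma exists_min_word (S₀ : Finset Γ) (hsym : ∀ s ∈ S₀, s⁻¹ ∈ S₀)
    (hgen : Subgroup.closure (S₀ : Set Γ) = ⊤) (g : Γ) :
    ∃ l : List Γ, (∀ s ∈ l, s ∈ S₀) ∧ l.length = wordLength S₀ g ∧ l.prod = g := by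
  have hg : g ∈ Submonoid.closure (S₀ : Set Γ) := by
    have h1 : g ∈ (Subgroup.closure (S₀ : Set Γ)).toSubmonoid := by
      rw [hgen]; trivial
    rw [Subgroup.closure_toSubmonoid] at h1
    have h2 : ((S₀ : Set Γ) ∪ (S₀ : Set Γ)⁻¹) = (S₀ : Set Γ) := by
      apply Set.union_eq_self_of_subset_right
      intro y hy
      have := hsym y⁻¹ (Set.mem_inv.mp hy)
      simpa using this
    rwa [h2] at h1
  obtain ⟨l, hl, hprod⟩ := Submonoid.exists_list_of_mem_closure hg
  have hne : {n : ℕ | ∃ l' : List Γ, (∀ s ∈ l', s ∈ S₀) ∧ l'.length = n ∧ l'.prod = g}.Nonempty :=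
    ⟨l.length, l, hl, rfl, hprod⟩
  obtain ⟨l', hl', hlen, hp⟩ := Nat.sInf_mem hne
  exact ⟨l', hl', hlen, hp⟩

lemma cocycle_wordLength_bound (ψ : Λ ≃* Multiplicative (Fin m → ℤ)) (R : RepSystem Λ)
    (S₀ : Finset Γ) (hsym : ∀ s ∈ S₀, s⁻¹ ∈ S₀)
    (hgen : Subgroup.closure (S₀ : Set Γ) = ⊤) :
    ∃ C : ℝ, 0 ≤ C ∧ ∀ x ∈ R.Δ, ∀ s : Γ, ∀ i : Fin m,
      |(cocycle ψ R x s i : ℝ)| ≤ C * (wordLength S₀ s : ℝ) := by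
  set C : ℝ := ∑ x ∈ R.Δ, ∑ g ∈ S₀, ∑ i : Fin m, |(cocycle ψ R x g i : ℝ)| with hC
  have hC0 : 0 ≤ C := by positivity
  have hterm : ∀ x ∈ R.Δ, ∀ g ∈ S₀, ∀ i : Fin m, |(cocycle ψ R x g i : ℝ)| ≤ C := by
    intro x hx g hg i
    calc |(cocycle ψ R x g i : ℝ)|
        ≤ ∑ i' : Fin m, |(cocycle ψ R x g i' : ℝ)| :=
          Finset.single_le_sum (f := fun i' => |(cocycle ψ R x g i' : ℝ)|)
            (fun _ _ => abs_nonneg _) (Finset.mem_univ i)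
      _ ≤ ∑ g' ∈ S₀, ∑ i' : Fin m, |(cocycle ψ R x g' i' : ℝ)| :=
          Finset.single_le_sum (f := fun g' => ∑ i' : Fin m, |(cocycle ψ R x g' i' : ℝ)|)
            (fun _ _ => by positivity) hg
      _ ≤ C := Finset.single_le_sum
            (f := fun x' => ∑ g' ∈ S₀, ∑ i' : Fin m, |(cocycle ψ R x' g' i' : ℝ)|)
            (fun _ _ => by positivity) hx
  have hlist : ∀ l : List Γ, (∀ g ∈ l, g ∈ S₀) → ∀ x ∈ R.Δ, ∀ i : Fin m,
      |(cocycle ψ R x l.prod i : ℝ)| ≤ C * l.length := by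
    intro l
    induction l with
    | nil =>
      intro _ x hx i
      simp [cocycle_one ψ R hx]
    | cons g l ih =>
      intro hmem x hx i
      have h1 : g ∈ S₀ := hmem g (by simp)
      have h2 : ∀ g' ∈ l, g' ∈ S₀ := fun g' h => hmem g' (by simp [h])
      have hrep : R.rep (x * g) ∈ R.Δ := R.rep_mem _
      have hkey : cocycle ψ R x (g :: l).prod =
          cocycle ψ R x g + cocycle ψ R (R.rep (x * g)) l.prod := by
        rw [List.prod_cons, cocycle_mul]
      calc |(cocycle ψ R x (g :: l).prod i : ℝ)|
          = |((cocycle ψ R x g i : ℝ) + (cocycle ψ R (R.rep (x * g)) l.prod i : ℝ))| := by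
            rw [hkey]; push_cast [Pi.add_apply]; rfl
        _ ≤ |(cocycle ψ R x g i : ℝ)| + |(cocycle ψ R (R.rep (x * g)) l.prod i : ℝ)| :=
            abs_add_le _ _
        _ ≤ C + C * l.length := add_le_add (hterm x hx g h1 i) (ih h2 _ hrep i)
        _ = C * (g :: l).length := by simp [List.length_cons]; push_cast; ring
  refine ⟨C, hC0, ?_⟩
  intro x hx s i
  obtain ⟨l, hl, hlen, hp⟩ := exists_min_word S₀ hsym hgen s
  have := hlist l hl x hx i
  rwa [hp, hlen] at this

end AuxProofs

/-- If `μ` has finite second moment then `v̂` is square-integrable, the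
drift `ζ` is well defined (absolutely convergent), and `χ(v̂) = ⟨v, ζ⟩`. -/
theorem vhat_sq_int_and_drift
    {Γ : Type*} [Group Γ] [Countable Γ] {Λ : Subgroup Γ} (hN : Λ.Normal)
    (hI : Λ.index ≠ 0) {m : ℕ} (hm : 1 ≤ m) (ψ : Λ ≃* Multiplicative (Fin m → ℤ))
    (R : RepSystem Λ) (μ : Γ → ℝ) (hμ : IsProb μ) (hmom : FinSecondMoment μ)
    (v : Fin m → ℝ) :
    SqInt R μ (vhat ψ R v) ∧
    (∀ x ∈ R.Δ, Summable (fun s : Γ =>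
        μ s * Real.sqrt (∑ i, ((cocycle ψ R x s i : ℝ)) ^ 2))) ∧
    chi R μ (vhat ψ R v) = ∑ i, v i * drift ψ R μ i := by
  obtain ⟨S₀, hsym, hgen, hsum⟩ := hmom
  obtain ⟨C, hC0, hCb⟩ := cocycle_wordLength_bound ψ R S₀ hsym hgen
  set W : Γ → ℝ := fun s => (wordLength S₀ s : ℝ) with hW
  have hWnn : ∀ s, 0 ≤ W s := fun s => Nat.cast_nonneg _
  have hμ0 : ∀ g, 0 ≤ μ g := hμ.1
  have hμsum : Summable μ := hμ.2.summable
  have hF : (0 : ℝ) < (Λ.index : ℝ) := by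
    have := Nat.pos_of_ne_zero hI
    exact_mod_cast this
  -- basic summabilities
  have h2 : Summable (fun s : Γ => μ s * W s ^ 2) := by
    apply hsum.congr
    intro s
    ring
  have h1 : Summable (fun s : Γ => μ s * W s) := by
    apply Summable.of_nonneg_of_le (fun s => mul_nonneg (hμ0 s) (hWnn s))
      (f := fun s => μ s * W s ^ 2 + μ s) ?_ (h2.add hμsum)
    intro s
    have : W s ≤ W s ^ 2 + 1 := by nlinarith [hWnn s]
    calc μ s * W s ≤ μ s * (W s ^ 2 + 1) := by
          exact mul_le_mul_of_nonneg_left this (hμ0 s)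
      _ = μ s * W s ^ 2 + μ s := by ring
  -- per-coordinate summability
  have hco : ∀ x ∈ R.Δ, ∀ i : Fin m, Summable (fun s : Γ => μ s * (cocycle ψ R x s i : ℝ)) := by
    intro x hx i
    apply Summable.of_abs
    apply Summable.of_nonneg_of_le (fun s => abs_nonneg _)
      (f := fun s => C * (μ s * W s)) ?_ (h1.mul_left C)
    intro s
    rw [abs_mul, abs_of_nonneg (hμ0 s)]
    calc μ s * |(cocycle ψ R x s i : ℝ)| ≤ μ s * (C * W s) :=
          mul_le_mul_of_nonneg_left (hCb x hx s i) (hμ0 s)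
      _ = C * (μ s * W s) := by ring
  set K : ℝ := (∑ i, |v i|) * C with hK
  have hK0 : 0 ≤ K := by positivity
  have hvb : ∀ x ∈ R.Δ, ∀ s : Γ, |vhat ψ R v x s| ≤ K * W s := by
    intro x hx s
    unfold vhat
    calc |∑ i, v i * (cocycle ψ R x s i : ℝ)|
        ≤ ∑ i, |v i * (cocycle ψ R x s i : ℝ)| := Finset.abs_sum_le_sum_abs _ _
      _ ≤ ∑ i, |v i| * (C * W s) := by
          apply Finset.sum_le_sum
          intro i _
          rw [abs_mul]
          exact mul_le_mul_of_nonneg_left (hCb x hx s i) (abs_nonneg _)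
      _ = K * W s := by rw [← Finset.sum_mul]; ring
  refine ⟨?_, ?_, ?_⟩
  · -- square integrability
    intro x hx
    apply Summable.of_nonneg_of_le
      (fun s => mul_nonneg (div_nonneg (hμ0 s) hF.le) (sq_nonneg _))
      (f := fun s => K ^ 2 / (Λ.index : ℝ) * (μ s * W s ^ 2)) ?_ (h2.mul_left _)
    intro s
    have hb : vhat ψ R v x s ^ 2 ≤ K ^ 2 * W s ^ 2 := by
      have := hvb x hx s
      calc vhat ψ R v x s ^ 2 = |vhat ψ R v x s| ^ 2 := (sq_abs _).symm
        _ ≤ (K * W s) ^ 2 := by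
            apply pow_le_pow_left₀ (abs_nonneg _) this
        _ = K ^ 2 * W s ^ 2 := by ring
    calc μ s / (Λ.index : ℝ) * vhat ψ R v x s ^ 2
        ≤ μ s / (Λ.index : ℝ) * (K ^ 2 * W s ^ 2) := by
          exact mul_le_mul_of_nonneg_left hb (div_nonneg (hμ0 s) hF.le)
      _ = K ^ 2 / (Λ.index : ℝ) * (μ s * W s ^ 2) := by ring
  · -- the drift is absolutely convergent
    intro x hx
    apply Summable.of_nonneg_of_le
      (fun s => mul_nonneg (hμ0 s) (Real.sqrt_nonneg _))
      (f := fun s => (Real.sqrt m * C) * (μ s * W s)) ?_ (h1.mul_left _)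
    intro s
    have hsq : (∑ i, ((cocycle ψ R x s i : ℝ)) ^ 2) ≤ (m : ℝ) * (C * W s) ^ 2 := by
      calc (∑ i, ((cocycle ψ R x s i : ℝ)) ^ 2) ≤ ∑ _i : Fin m, (C * W s) ^ 2 := by
            apply Finset.sum_le_sum
            intro i _
            rw [← sq_abs]
            apply pow_le_pow_left₀ (abs_nonneg _) (hCb x hx s i)
        _ = (m : ℝ) * (C * W s) ^ 2 := by simp [mul_comm]
    have hroot : Real.sqrt (∑ i, ((cocycle ψ R x s i : ℝ)) ^ 2) ≤ Real.sqrt m * (C * W s) := by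
      calc Real.sqrt (∑ i, ((cocycle ψ R x s i : ℝ)) ^ 2)
          ≤ Real.sqrt ((m : ℝ) * (C * W s) ^ 2) := Real.sqrt_le_sqrt hsq
        _ = Real.sqrt m * (C * W s) := by
            rw [Real.sqrt_mul (Nat.cast_nonneg m), Real.sqrt_sq (by positivity)]
    calc μ s * Real.sqrt (∑ i, ((cocycle ψ R x s i : ℝ)) ^ 2)
        ≤ μ s * (Real.sqrt m * (C * W s)) := mul_le_mul_of_nonneg_left hroot (hμ0 s)
      _ = (Real.sqrt m * C) * (μ s * W s) := by ring
  · -- χ(v̂) = ⟨v, ζ⟩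
    unfold chi drift vhat
    have hstep : ∀ x ∈ R.Δ,
        (∑' s : Γ, μ s / (Λ.index : ℝ) * ∑ i, v i * (cocycle ψ R x s i : ℝ)) =
        ∑ i, v i * ((Λ.index : ℝ)⁻¹ * ∑' s : Γ, μ s * (cocycle ψ R x s i : ℝ)) := by
      intro x hx
      have heq : ∀ s : Γ, μ s / (Λ.index : ℝ) * ∑ i, v i * (cocycle ψ R x s i : ℝ) =
          ∑ i, (v i * (Λ.index : ℝ)⁻¹) * (μ s * (cocycle ψ R x s i : ℝ)) := by
        intro s
        rw [Finset.mul_sum]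
        apply Finset.sum_congr rfl
        intro i _
        ring
      rw [tsum_congr heq, Summable.tsum_finsetSum (fun i _ => ((hco x hx i).mul_left _))]
      apply Finset.sum_congr rfl
      intro i _
      rw [tsum_mul_left]
      ring
    rw [Finset.sum_congr rfl hstep, Finset.sum_comm]
    simp only [Finset.mul_sum]

end NSVA
end

section
/- Let μ be a non-degenerate probability measure on Γ with finite second moment, with support S = supp μ. Let v ∈ ℝ^m and let v̂ = u + df be a harmonic decomposition of the 1-form v̂. Then ⟨v, θ(γ)⟩ = 0 for all γ ∈ Γ if and only if ∑_{x∈Δ} u(x,s) = 0 for every s ∈ S. In particular, if ⟨v, θ(γ)⟩ = 0 for all γ ∈ Γ, then χ(v̂) = χ(u) = 0. -/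
open scoped BigOperators Classical
open Filter Matrix MeasureTheory

namespace NSVA

section AuxNSVA

variable {Γ : Type*} [Group Γ] {Λ : Subgroup Γ} {m : ℕ}

lemma rep_cancel (R : RepSystem Λ) {x : Γ} (hx : x ∈ R.Δ) (γ : Γ) :
    R.rep (R.rep (x * γ) * γ⁻¹) = x := by
  have h1 : R.rep (x * γ) * γ⁻¹ = (x * γ * (R.rep (x * γ))⁻¹)⁻¹ * x := by group
  rw [h1, R.rep_coset x _ (inv_mem (R.rep_spec (x * γ))), R.rep_idem x hx]

lemma perm_sum {M : Type*} [AddCommMonoid M] (R : RepSystem Λ) (γ : Γ) (g : Γ → M) :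
    ∑ x ∈ R.Δ, g (R.rep (x * γ)) = ∑ x ∈ R.Δ, g x := by
  refine Finset.sum_nbij' (fun x => R.rep (x * γ)) (fun x => R.rep (x * γ⁻¹))
    (fun a _ => R.rep_mem _) (fun a _ => R.rep_mem _)
    (fun a ha => rep_cancel R ha γ) (fun a ha => by simpa using rep_cancel R ha γ⁻¹)
    (fun a _ => rfl)

lemma transfer_mul' (ψ : Λ ≃* Multiplicative (Fin m → ℤ)) (R : RepSystem Λ) (s t : Γ) :
    transfer ψ R (s * t) = transfer ψ R s + transfer ψ R t := by
  unfold transfer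
  simp_rw [cocycle_mul ψ R _ s t]
  rw [Finset.sum_add_distrib]
  congr 1
  exact perm_sum R s (fun y => cocycle ψ R y t)

end AuxNSVA

/-- `⟨v, θ(γ)⟩ = 0` for all `γ` iff `∑_{x∈Δ} u(x,s) = 0` for every
`s ∈ supp μ`, where `u` is the harmonic part of `v̂`; in particular in that case
`χ(v̂) = χ(u) = 0`. -/
theorem perp_transfer_iff_harmonic_row_sums_zero
    {Γ : Type*} [Group Γ] [Countable Γ] {Λ : Subgroup Γ} (hN : Λ.Normal)
    (hI : Λ.index ≠ 0) {m : ℕ} (hm : 1 ≤ m) (ψ : Λ ≃* Multiplicative (Fin m → ℤ))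
    (R : RepSystem Λ) (μ : Γ → ℝ) (hμ : IsProb μ) (hnd : Nondeg μ)
    (hmom : FinSecondMoment μ) (v : Fin m → ℝ)
    (u : Γ → Γ → ℝ) (f : Γ → ℝ) (hdec : IsHarmDecomp R μ (vhat ψ R v) u f) :
    ((∀ γ : Γ, (∑ i, v i * (transfer ψ R γ i : ℝ)) = 0) ↔
      ∀ s : Γ, 0 < μ s → (∑ x ∈ R.Δ, u x s) = 0) ∧
    ((∀ γ : Γ, (∑ i, v i * (transfer ψ R γ i : ℝ)) = 0) →
      chi R μ (vhat ψ R v) = 0 ∧ chi R μ u = 0) := by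
  classical
  obtain ⟨hone, ⟨hsq, hharm⟩, heq⟩ := hdec
  have keyrowv : ∀ s : Γ, (∑ x ∈ R.Δ, vhat ψ R v x s)
      = ∑ i, v i * (transfer ψ R s i : ℝ) := by
    intro s
    simp only [vhat, transfer]
    rw [Finset.sum_comm]
    refine Finset.sum_congr rfl fun i _ => ?_
    rw [Finset.sum_apply]
    push_cast
    rw [Finset.mul_sum]
  have keyrow : ∀ s : Γ, (∑ x ∈ R.Δ, u x s) = ∑ i, v i * (transfer ψ R s i : ℝ) := by
    intro s
    rw [← keyrowv s]
    rw [Finset.sum_congr rfl (fun x hx => heq x hx s)]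
    simp only [dd]
    rw [Finset.sum_add_distrib, Finset.sum_sub_distrib, perm_sum R s f]
    ring
  have keymul : ∀ s t : Γ, (∑ i, v i * (transfer ψ R (s * t) i : ℝ))
      = (∑ i, v i * (transfer ψ R s i : ℝ)) + ∑ i, v i * (transfer ψ R t i : ℝ) := by
    intro s t
    rw [← Finset.sum_add_distrib]
    refine Finset.sum_congr rfl fun i _ => ?_
    rw [transfer_mul' ψ R s t, Pi.add_apply]
    push_cast
    ring
  have hμsum : Summable μ := hμ.2.summable
  have hc_nonneg : ∀ s : Γ, 0 ≤ μ s / (Λ.index : ℝ) :=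
    fun s => div_nonneg (hμ.1 s) (Nat.cast_nonneg _)
  have hsummu : ∀ x ∈ R.Δ, Summable (fun s : Γ => μ s / (Λ.index : ℝ) * u x s) := by
    intro x hx
    have h2 := hsq x hx
    have h1 : Summable (fun s : Γ => μ s / (Λ.index : ℝ)) := hμsum.div_const _
    refine Summable.of_norm_bounded
      (g := fun s => (1/2) * (μ s / (Λ.index : ℝ)) + (1/2) * (μ s / (Λ.index : ℝ) * u x s ^ 2))
      ((h1.mul_left _).add (h2.mul_left _)) (fun s => ?_)
    have hc := hc_nonneg s
    rw [Real.norm_eq_abs, abs_mul, abs_of_nonneg hc]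
    nlinarith [mul_nonneg hc (sq_nonneg (|u x s| - 1)), sq_abs (u x s), abs_nonneg (u x s)]
  have hsummv : ∀ x ∈ R.Δ, Summable (fun s : Γ => μ s / (Λ.index : ℝ) * vhat ψ R v x s) := by
    intro x hx
    have hd : Summable (fun s : Γ => μ s / (Λ.index : ℝ) * dd R f x s) := by
      set M := R.Δ.sup' ⟨1, R.one_mem⟩ (fun y => |f y|) with hM
      refine Summable.of_norm_bounded (g := fun s => μ s / (Λ.index : ℝ) * (2 * M))
        ((hμsum.div_const _).mul_right _) (fun s => ?_)
      have h1 : |f (R.rep (x * s))| ≤ M := by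
        rw [hM]; exact Finset.le_sup' (fun y => |f y|) (R.rep_mem _)
      have h2 : |f x| ≤ M := by rw [hM]; exact Finset.le_sup' (fun y => |f y|) hx
      have h3 : |dd R f x s| ≤ 2 * M := by
        simp only [dd]
        calc |f (R.rep (x * s)) - f x| ≤ |f (R.rep (x * s))| + |f x| := abs_sub _ _
          _ ≤ 2 * M := by linarith
      rw [Real.norm_eq_abs, abs_mul, abs_of_nonneg (hc_nonneg s)]
      exact mul_le_mul_of_nonneg_left h3 (hc_nonneg s)
    have hfun : (fun s : Γ => μ s / (Λ.index : ℝ) * vhat ψ R v x s)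
        = fun s => μ s / (Λ.index : ℝ) * u x s + μ s / (Λ.index : ℝ) * dd R f x s := by
      funext s; rw [heq x hx s]; ring
    rw [hfun]
    exact (hsummu x hx).add hd
  constructor
  · constructor
    · intro h s _
      rw [keyrow s, h s]
    · intro h γ
      refine Subsemigroup.closure_induction
        (p := fun γ _ => (∑ i, v i * (transfer ψ R γ i : ℝ)) = 0)
        (fun s hs => by show (∑ i, v i * (transfer ψ R s i : ℝ)) = 0; rw [← keyrow s]; exact h s hs)
        (fun a b _ _ ha hb => by
          show (∑ i, v i * (transfer ψ R (a * b) i : ℝ)) = 0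
          rw [keymul a b]
          rw [ha, hb, add_zero]) (hnd γ)
  · intro h
    have hzu : ∀ s : Γ, (∑ x ∈ R.Δ, u x s) = 0 := fun s => by rw [keyrow s]; exact h s
    have hzv : ∀ s : Γ, (∑ x ∈ R.Δ, vhat ψ R v x s) = 0 := fun s => by
      rw [keyrowv s]; exact h s
    constructor
    · unfold chi
      rw [← Summable.tsum_finsetSum (fun x hx => hsummv x hx)]
      calc (∑' s : Γ, ∑ x ∈ R.Δ, μ s / (Λ.index : ℝ) * vhat ψ R v x s)
          = ∑' s : Γ, (0 : ℝ) := by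
            refine tsum_congr fun s => ?_
            rw [← Finset.mul_sum, hzv s, mul_zero]
        _ = 0 := tsum_zero
    · unfold chi
      rw [← Summable.tsum_finsetSum (fun x hx => hsummu x hx)]
      calc (∑' s : Γ, ∑ x ∈ R.Δ, μ s / (Λ.index : ℝ) * u x s)
          = ∑' s : Γ, (0 : ℝ) := by
            refine tsum_congr fun s => ?_
            rw [← Finset.mul_sum, hzu s, mul_zero]
        _ = 0 := tsum_zero


end NSVA
end

section
/- Assume in addition that Δ is a subgroup of Γ (so Γ is the semidirect product Λ ⋊ Δ, with Δ mapping bijectively to F = Γ/Λ). Let ⟨·,·⟩ be an Ad-invariant inner product on ℝ^m, define v̂(x,s) := ⟨v, α(x,s)⟩ with respect to this inner product, and let θ̲ := (1/#F)·∑_{f∈F} Ad(f). Let μ be a non-degenerate probability measure on Γ with finite second moment. If v lies in the range of θ̲ and v̂ = u + df is a harmonic decomposition of v̂, then u(x,s) = u(x',s) for all x, x' ∈ Δ and all s ∈ Γ (the harmonic part of v̂ does not depend on the first variable). -/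
open scoped BigOperators Classical
open Filter Matrix MeasureTheory

namespace NSVA

private def coords {Γ : Type*} [Group Γ] {Λ : Subgroup Γ} {m : ℕ}
    (ψ : Λ ≃* Multiplicative (Fin m → ℤ)) (l : Γ) (hl : l ∈ Λ) : Fin m → ℝ :=
  fun i => ((Multiplicative.toAdd (ψ ⟨l, hl⟩)) i : ℝ)

private theorem coords_congr {Γ : Type*} [Group Γ] {Λ : Subgroup Γ} {m : ℕ}
    (ψ : Λ ≃* Multiplicative (Fin m → ℤ)) {a b : Γ} (ha : a ∈ Λ) (hb : b ∈ Λ)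
    (h : a = b) : coords ψ a ha = coords ψ b hb := by subst h; rfl

/-- In a semidirect product (`Δ` a subgroup), for `v` in the range of the
normalized transfer `θ̲`, the harmonic part of `v̂` does not depend on the first variable. -/
theorem harmonic_part_const_of_semidirect
    {Γ : Type*} [Group Γ] [Countable Γ] {Λ : Subgroup Γ} (hN : Λ.Normal)
    (hI : Λ.index ≠ 0) {m : ℕ} (hm : 1 ≤ m) (ψ : Λ ≃* Multiplicative (Fin m → ℤ))
    (R : RepSystem Λ)
    (hΔ : ∃ H : Subgroup Γ, (H : Set Γ) = (R.Δ : Set Γ))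
    (Ad : Γ ⧸ Λ → (Fin m → ℝ) →ₗ[ℝ] (Fin m → ℝ))
    (hAd : ∀ (x : Γ) (lam : Λ),
        Ad (QuotientGroup.mk x) (fun i => (Multiplicative.toAdd (ψ lam) i : ℝ)) =
          fun i => (Multiplicative.toAdd
            (ψ ⟨x * (lam : Γ) * x⁻¹, hN.conj_mem (lam : Γ) lam.2 x⟩) i : ℝ))
    (B : (Fin m → ℝ) →ₗ[ℝ] (Fin m → ℝ) →ₗ[ℝ] ℝ)
    (hBsymm : ∀ u w : Fin m → ℝ, B u w = B w u)
    (hBpos : ∀ u : Fin m → ℝ, u ≠ 0 → 0 < B u u)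
    (hBinv : ∀ (f : Γ ⧸ Λ) (u w : Fin m → ℝ), B (Ad f u) (Ad f w) = B u w)
    (T : (Fin m → ℝ) →ₗ[ℝ] (Fin m → ℝ))
    (hT : ∀ v : Fin m → ℝ, T v = (Λ.index : ℝ)⁻¹ • ∑' f : Γ ⧸ Λ, Ad f v)
    (μ : Γ → ℝ) (hμ : IsProb μ) (hnd : Nondeg μ) (hmom : FinSecondMoment μ)
    (v : Fin m → ℝ) (hv : v ∈ LinearMap.range T)
    (u : Γ → Γ → ℝ) (f : Γ → ℝ) (hdec : IsHarmDecomp R μ (vhatB ψ R B v) u f) :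
    ∀ x ∈ R.Δ, ∀ x' ∈ R.Δ, ∀ s : Γ, u x s = u x' s := by
  classical
  obtain ⟨H, hH⟩ := hΔ
  -- subgroup facts about Δ
  have hmemH : ∀ g : Γ, g ∈ R.Δ ↔ g ∈ H := fun g => by
    rw [← Finset.mem_coe, ← hH, SetLike.mem_coe]
  have hmul : ∀ {a b : Γ}, a ∈ R.Δ → b ∈ R.Δ → a * b ∈ R.Δ := fun ha hb =>
    (hmemH _).mpr (mul_mem ((hmemH _).mp ha) ((hmemH _).mp hb))
  have hinv : ∀ {a : Γ}, a ∈ R.Δ → a⁻¹ ∈ R.Δ := fun ha =>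
    (hmemH _).mpr (inv_mem ((hmemH _).mp ha))
  -- rep is multiplicative
  have hrep_mul_mem : ∀ x ∈ R.Δ, ∀ s : Γ, R.rep (x * s) = x * R.rep s := by
    intro x hx s
    have h1 : x * R.rep s ∈ R.Δ := hmul hx (R.rep_mem s)
    have h2 : (x * (s * (R.rep s)⁻¹) * x⁻¹) ∈ Λ := hN.conj_mem _ (R.rep_spec s) x
    have h3 : x * s = (x * (s * (R.rep s)⁻¹) * x⁻¹) * (x * R.rep s) := by group
    rw [h3, R.rep_coset _ _ h2, R.rep_idem _ h1]
  have hrep_mul : ∀ g h : Γ, R.rep (g * h) = R.rep g * R.rep h := by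
    intro g h
    have h1 : g * h = (g * (R.rep g)⁻¹) * (R.rep g * h) := by group
    rw [h1, R.rep_coset _ _ (R.rep_spec g), hrep_mul_mem (R.rep g) (R.rep_mem g) h]
  -- Ad is multiplicative
  have hAd' : ∀ (x l : Γ) (hl : l ∈ Λ),
      Ad (QuotientGroup.mk x) (coords ψ l hl) = coords ψ (x * l * x⁻¹) (hN.conj_mem l hl x) :=
    fun x l hl => hAd x ⟨l, hl⟩
  have hbasis : ∀ j : Fin m, ∃ l, ∃ hl : l ∈ Λ, coords ψ l hl = Pi.single j 1 := by
    intro j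
    refine ⟨((ψ.symm (Multiplicative.ofAdd (Pi.single j 1)) : Λ) : Γ),
      (ψ.symm (Multiplicative.ofAdd (Pi.single j 1))).2, ?_⟩
    funext i
    show ((Multiplicative.toAdd (ψ (ψ.symm (Multiplicative.ofAdd (Pi.single j 1))))) i : ℝ) = _
    rw [MulEquiv.apply_symm_apply]
    by_cases h : i = j <;> simp [h, Pi.single_apply]
  have hAdmul : ∀ fq gq : Γ ⧸ Λ, (Ad fq).comp (Ad gq) = Ad (fq * gq) := by
    intro fq gq
    refine QuotientGroup.induction_on fq ?_
    intro x
    refine QuotientGroup.induction_on gq ?_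
    intro y
    apply Module.Basis.ext (Pi.basisFun ℝ (Fin m))
    intro j
    obtain ⟨l, hl, hlj⟩ := hbasis j
    rw [Pi.basisFun_apply, ← hlj]
    show Ad _ (Ad _ (coords ψ l hl)) = Ad _ (coords ψ l hl)
    rw [hAd' y l hl, hAd' x _ _, ← QuotientGroup.mk_mul, hAd' (x * y) l hl]
    exact coords_congr ψ _ _ (by group)
  -- finiteness of the quotient
  have hfin : Finite (Γ ⧸ Λ) := by
    rw [Subgroup.index] at hI
    exact (Nat.card_ne_zero.mp hI).2
  have : Fintype (Γ ⧸ Λ) := Fintype.ofFinite _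
  obtain ⟨v₀, rfl⟩ := hv
  -- the vector T v₀ is Ad-invariant
  have hAdv : ∀ fq : Γ ⧸ Λ, Ad fq (T v₀) = T v₀ := by
    intro fq
    rw [hT v₀, tsum_fintype, _root_.map_smul, map_sum]
    congr 1
    exact Fintype.sum_equiv (Equiv.mulLeft fq) _ _ (fun gq => by
      rw [← LinearMap.comp_apply, hAdmul]; rfl)
  -- v̂ does not depend on the first variable
  have hVx : ∀ x ∈ R.Δ, ∀ s : Γ, vhatB ψ R B (T v₀) x s = vhatB ψ R B (T v₀) 1 s := by
    intro x hx s
    show B (T v₀) (coords ψ _ (R.rep_spec (x * s))) =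
      B (T v₀) (coords ψ _ (R.rep_spec (1 * s)))
    have h1 : coords ψ (x * s * (R.rep (x * s))⁻¹) (R.rep_spec (x * s))
        = Ad (QuotientGroup.mk x) (coords ψ (s * (R.rep s)⁻¹) (R.rep_spec s)) := by
      rw [hAd' x _ (R.rep_spec s)]
      exact coords_congr ψ _ _ (by rw [hrep_mul_mem x hx s]; group)
    have h2 : coords ψ (1 * s * (R.rep (1 * s))⁻¹) (R.rep_spec (1 * s))
        = coords ψ (s * (R.rep s)⁻¹) (R.rep_spec s) :=
      coords_congr ψ _ _ (by rw [one_mul])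
    rw [h1, h2]
    conv_lhs => rw [← hAdv (QuotientGroup.mk x)]
    rw [hBinv]
  set V : Γ → ℝ := fun s => vhatB ψ R B (T v₀) 1 s with hVdef
  obtain ⟨h1f, ⟨hsq, hharm⟩, hdecomp⟩ := hdec
  have hux : ∀ x ∈ R.Δ, ∀ s : Γ, u x s = V s - f (x * R.rep s) + f x := by
    intro x hx s
    have h := hdecomp x hx s
    rw [hVx x hx s] at h
    have hdd : dd R f x s = f (x * R.rep s) - f x := by
      rw [dd, hrep_mul_mem x hx s]
    rw [hdd] at h
    rw [hVdef]
    linarith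
  -- summability facts
  have hμnn := hμ.1
  have hμsum : Summable μ := hμ.2.summable
  have hμtsum : ∑' s, μ s = 1 := hμ.2.tsum_eq
  have hIne : (Λ.index : ℝ) ≠ 0 := Nat.cast_ne_zero.mpr hI
  have hsum_u2 : ∀ x ∈ R.Δ, Summable (fun s => μ s * u x s ^ 2) := by
    intro x hx
    have hsx : (fun s => μ s * u x s ^ 2)
        = fun s => (Λ.index : ℝ) * (μ s / (Λ.index : ℝ) * u x s ^ 2) := by
      funext s; field_simp
    rw [hsx]
    exact (hsq x hx).mul_left _
  have hsum_mu_u : ∀ x ∈ R.Δ, Summable (fun s => μ s * u x s) := by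
    intro x hx
    apply Summable.of_abs
    apply Summable.of_nonneg_of_le (fun s => abs_nonneg _) (fun s => ?_)
      ((hμsum.add (hsum_u2 x hx)).div_const 2)
    rw [abs_mul, abs_of_nonneg (hμnn s)]
    nlinarith [mul_nonneg (hμnn s) (sq_nonneg (|u x s| - 1)), sq_abs (u x s),
      abs_nonneg (u x s), hμnn s]
  have hsum_f : ∀ x : Γ, Summable (fun s => μ s * f (x * R.rep s)) := by
    intro x
    obtain ⟨y₀, hy₀, hmax⟩ := Finset.exists_max_image R.Δ (fun y => |f (x * y)|)
      ⟨1, R.one_mem⟩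
    apply Summable.of_abs
    apply Summable.of_nonneg_of_le (fun s => abs_nonneg _) (fun s => ?_)
      (hμsum.mul_right (|f (x * y₀)|))
    rw [abs_mul, abs_of_nonneg (hμnn s)]
    exact mul_le_mul_of_nonneg_left (hmax _ (R.rep_mem s)) (hμnn s)
  have hsumV : Summable (fun s => μ s * V s) := by
    have h : (fun s => μ s * V s)
        = fun s => μ s * u 1 s + (μ s * f (1 * R.rep s) - μ s * f 1) := by
      funext s
      have h := hux 1 R.one_mem s
      linear_combination (-(μ s)) * h
    rw [h]
    exact (hsum_mu_u 1 R.one_mem).add ((hsum_f 1).sub (hμsum.mul_right (f 1)))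
  set G : Γ → ℝ := fun x => ∑' s, μ s * f (x * R.rep s) with hGdef
  have htsum_u : ∀ x ∈ R.Δ, ∑' s, μ s * u x s = (∑' s, μ s * V s) - G x + f x := by
    intro x hx
    have h1 : (fun s => μ s * u x s)
        = fun s => (μ s * V s - μ s * f (x * R.rep s)) + μ s * f x := by
      funext s
      linear_combination μ s * (hux x hx s)
    rw [h1, Summable.tsum_add (hsumV.sub (hsum_f x)) (hμsum.mul_right (f x)),
      Summable.tsum_sub hsumV (hsum_f x), tsum_mul_right, hμtsum, one_mul, hGdef]
  have hGf : ∀ x ∈ R.Δ, G x - f x = G 1 - f 1 := by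
    intro x hx
    have h := (hharm x hx).trans (hharm 1 R.one_mem).symm
    rw [htsum_u x hx, htsum_u 1 R.one_mem] at h
    linarith
  -- the induced measure q on Δ
  set q : Γ → ℝ := fun y => ∑' s, if R.rep s = y then μ s else 0 with hqdef
  have hqsummand : ∀ y, Summable (fun s => if R.rep s = y then μ s else 0) := by
    intro y
    apply Summable.of_nonneg_of_le (fun s => ?_) (fun s => ?_) hμsum
    · by_cases h : R.rep s = y <;> simp [h, hμnn s]
    · by_cases h : R.rep s = y <;> simp [h, hμnn s]
  have hqnn : ∀ y, 0 ≤ q y := fun y => tsum_nonneg (fun s => by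
    by_cases h : R.rep s = y <;> simp [h, hμnn s])
  have hqge : ∀ s : Γ, μ s ≤ q (R.rep s) := by
    intro s
    have h := Summable.le_tsum (hqsummand (R.rep s)) s (fun j _ => by
      by_cases h : R.rep j = R.rep s <;> simp [h, hμnn j])
    simpa using h
  have hGsum : ∀ x : Γ, G x = ∑ y ∈ R.Δ, q y * f (x * y) := by
    intro x
    have h1 : ∀ s : Γ, μ s * f (x * R.rep s)
        = ∑ y ∈ R.Δ, (if R.rep s = y then μ s else 0) * f (x * y) := by
      intro s
      rw [Finset.sum_congr rfl (fun y _ => show (if R.rep s = y then μ s else 0) * f (x * y)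
          = if R.rep s = y then μ s * f (x * y) else 0 by split_ifs <;> simp),
        Finset.sum_ite_eq]
      simp [R.rep_mem s]
    calc G x = ∑' s, ∑ y ∈ R.Δ, (if R.rep s = y then μ s else 0) * f (x * y) := by
          rw [hGdef]; exact tsum_congr fun s => h1 s
      _ = ∑ y ∈ R.Δ, ∑' s, (if R.rep s = y then μ s else 0) * f (x * y) :=
          Summable.tsum_finsetSum (fun y _ => (hqsummand y).mul_right _)
      _ = ∑ y ∈ R.Δ, q y * f (x * y) := Finset.sum_congr rfl (fun y _ => by
          rw [tsum_mul_right, hqdef])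
  have hqone : ∑ y ∈ R.Δ, q y = 1 := by
    have h1 : ∀ s : Γ, μ s = ∑ y ∈ R.Δ, (if R.rep s = y then μ s else 0) := by
      intro s; rw [Finset.sum_ite_eq]; simp [R.rep_mem s]
    calc ∑ y ∈ R.Δ, q y = ∑ y ∈ R.Δ, ∑' s, (if R.rep s = y then μ s else 0) := rfl
      _ = ∑' s, ∑ y ∈ R.Δ, (if R.rep s = y then μ s else 0) :=
          (Summable.tsum_finsetSum (fun y _ => hqsummand y)).symm
      _ = ∑' s, μ s := tsum_congr (fun s => (h1 s).symm)
      _ = 1 := hμtsum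
  have hshift : ∀ y ∈ R.Δ, ∑ x ∈ R.Δ, f (x * y) = ∑ x ∈ R.Δ, f x := by
    intro y hy
    exact Finset.sum_bij' (fun x _ => x * y) (fun x _ => x * y⁻¹)
      (fun x hx => hmul hx hy) (fun x hx => hmul hx (hinv hy))
      (fun x hx => by group) (fun x hx => by group) (fun x hx => rfl)
  have hGx_eq : ∀ x ∈ R.Δ, G x = f x := by
    have hsum0 : ∑ x ∈ R.Δ, (G x - f x) = 0 := by
      rw [Finset.sum_sub_distrib]
      have h : ∑ x ∈ R.Δ, G x = ∑ x ∈ R.Δ, f x := by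
        calc ∑ x ∈ R.Δ, G x = ∑ x ∈ R.Δ, ∑ y ∈ R.Δ, q y * f (x * y) :=
              Finset.sum_congr rfl (fun x _ => hGsum x)
          _ = ∑ y ∈ R.Δ, ∑ x ∈ R.Δ, q y * f (x * y) := Finset.sum_comm
          _ = ∑ y ∈ R.Δ, q y * ∑ x ∈ R.Δ, f (x * y) :=
              Finset.sum_congr rfl (fun y _ => (Finset.mul_sum _ _ _).symm)
          _ = ∑ y ∈ R.Δ, q y * ∑ x ∈ R.Δ, f x :=
              Finset.sum_congr rfl (fun y hy => by rw [hshift y hy])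
          _ = (∑ y ∈ R.Δ, q y) * ∑ x ∈ R.Δ, f x := (Finset.sum_mul _ _ _).symm
          _ = ∑ x ∈ R.Δ, f x := by rw [hqone, one_mul]
      rw [h, sub_self]
    have hconstsum : ∑ x ∈ R.Δ, (G x - f x) = (R.Δ.card : ℝ) * (G 1 - f 1) := by
      rw [Finset.sum_congr rfl (fun x hx => hGf x hx), Finset.sum_const, nsmul_eq_mul]
    intro x hx
    have hcard : (0 : ℝ) < (R.Δ.card : ℝ) :=
      Nat.cast_pos.mpr (Finset.card_pos.mpr ⟨1, R.one_mem⟩)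
    have h0 : G 1 - f 1 = 0 := by
      have h := hsum0
      rw [hconstsum] at h
      rcases mul_eq_zero.mp h with h | h
      · exact absurd h (ne_of_gt hcard)
      · exact h
    have h := hGf x hx
    rw [h0] at h
    linarith
  -- maximum principle: f is constant on Δ
  obtain ⟨x₀, hx₀, hmax⟩ := Finset.exists_max_image R.Δ f ⟨1, R.one_mem⟩
  have hstep : ∀ s : Γ, 0 < μ s → ∀ x ∈ R.Δ, f x = f x₀ → f (x * R.rep s) = f x₀ := by
    intro s hs x hx hfx
    have hterm : ∑ y ∈ R.Δ, q y * (f x₀ - f (x * y)) = 0 := by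
      have h : ∑ y ∈ R.Δ, q y * (f x₀ - f (x * y)) = (∑ y ∈ R.Δ, q y) * f x₀ - G x := by
        simp only [mul_sub]
        rw [Finset.sum_sub_distrib, ← Finset.sum_mul, ← hGsum x]
      rw [h, hqone, one_mul, hGx_eq x hx, hfx, sub_self]
    have hnn : ∀ y ∈ R.Δ, 0 ≤ q y * (f x₀ - f (x * y)) := fun y hy =>
      mul_nonneg (hqnn y) (sub_nonneg.mpr (hmax _ (hmul hx hy)))
    have hz := (Finset.sum_eq_zero_iff_of_nonneg hnn).mp hterm (R.rep s) (R.rep_mem s)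
    rcases mul_eq_zero.mp hz with h | h
    · exact absurd h (ne_of_gt (lt_of_lt_of_le hs (hqge s)))
    · linarith
  have hcl : ∀ g : Γ, g ∈ Subsemigroup.closure {x : Γ | 0 < μ x} →
      ∀ x ∈ R.Δ, f x = f x₀ → (x * R.rep g ∈ R.Δ ∧ f (x * R.rep g) = f x₀) := by
    intro g hg
    induction hg using Subsemigroup.closure_induction with
    | mem g hg' =>
      intro x hx hfx
      exact ⟨hmul hx (R.rep_mem g), hstep g hg' x hx hfx⟩
    | mul g h hgc hhc ihg ihh =>
      intro x hx hfx
      have h1 := ihg x hx hfx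
      have h2 := ihh (x * R.rep g) h1.1 h1.2
      rw [hrep_mul g h, ← mul_assoc]
      exact h2
  have hfconst : ∀ x ∈ R.Δ, f x = f x₀ := by
    intro x hx
    have hg := hnd (x₀⁻¹ * x)
    have hmemd : x₀⁻¹ * x ∈ R.Δ := hmul (hinv hx₀) hx
    have h := (hcl _ hg x₀ hx₀ rfl).2
    rw [R.rep_idem _ hmemd] at h
    rw [show x₀ * (x₀⁻¹ * x) = x from by group] at h
    exact h
  -- conclusion
  intro x hx x' hx' s
  have h1 := hux x hx s
  have h2 := hux x' hx' s
  rw [hfconst _ (hmul hx (R.rep_mem s)), hfconst _ hx] at h1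
  rw [hfconst _ (hmul hx' (R.rep_mem s)), hfconst _ hx'] at h2
  rw [h1, h2]


end NSVA
end
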